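/- arXiv:1906.02842 — 6 statements merged into one kernel-verified Lean document; each statement's English description precedes it below -/
import Mathlib

section
/- The composition of two rational relations on free monoids is a rational relation: if R' ⊆ A* × B* and R ⊆ B* × C* are rational subsets of the respective product monoids, then R ∘ R' = {(u,v) | ∃m ∈ B*, (u,m) ∈ R' ∧ (m,v) ∈ R} is a rational subset of A* × C*. -/
open scoped Pointwise

/-- Rational subsets of a monoid: smallest family containing finite subsets and closed
under union, product and submonoid generation (star). -/
inductive IsRational {M : Type} [Monoid M] : Set M → Prop
  | finite (s : Set M) : s.Finite → IsRational s
  | union (s t : Set M) : IsRational s → IsRational t → IsRational (s ∪ t)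
  | mul (s t : Set M) : IsRational s → IsRational t → IsRational (s * t)
  | star (s : Set M) : IsRational s → IsRational (Submonoid.closure s : Set M)

namespace EM

variable {M : Type} [Monoid M] {Q : Type}

/-- Walks in a monoid-labelled graph. -/
inductive Walk (E : Q → M → Q → Prop) : Q → Q → M → Prop
  | nil (p : Q) : Walk E p p 1
  | cons {p q r : Q} {m n : M} : E p m q → Walk E q r n → Walk E p r (m * n)

/-- Walks whose intermediate states (all states except the endpoints) lie in `S`. -/
inductive WalkIn (E : Q → M → Q → Prop) (S : Set Q) : Q → Q → M → Prop
  | nil (p : Q) : WalkIn E S p p 1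
  | single {p q : Q} {m : M} : E p m q → WalkIn E S p q m
  | cons {p q r : Q} {m n : M} : E p m q → q ∈ S → WalkIn E S q r n → WalkIn E S p r (m * n)

theorem Walk.cast {E : Q → M → Q → Prop} {p q : Q} {m m' : M} (h : Walk E p q m)
    (hm : m = m') : Walk E p q m' := hm ▸ h

theorem WalkIn.cast {E : Q → M → Q → Prop} {S : Set Q} {p q : Q} {m m' : M}
    (h : WalkIn E S p q m) (hm : m = m') : WalkIn E S p q m' := hm ▸ h

theorem walk_iff_walkIn_univ {E : Q → M → Q → Prop} {p q : Q} {m : M} :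
    Walk E p q m ↔ WalkIn E Set.univ p q m := by
  constructor
  · intro h
    induction h with
    | nil p => exact WalkIn.nil p
    | cons e _ ih => exact WalkIn.cons e trivial ih
  · intro h
    induction h with
    | nil p => exact Walk.nil p
    | single e => exact (Walk.cons e (Walk.nil _)).cast (mul_one _)
    | cons e _ _ ih => exact Walk.cons e ih

theorem WalkIn.mono {E : Q → M → Q → Prop} {S T : Set Q} (hST : S ⊆ T) {p q : Q} {m : M}
    (h : WalkIn E S p q m) : WalkIn E T p q m := by
  induction h with
  | nil p => exact .nil p
  | single e => exact .single e
  | cons e hq _ ih => exact .cons e (hST hq) ih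

theorem Walk.append {E : Q → M → Q → Prop} {p q r : Q} {m n : M}
    (h1 : Walk E p q m) (h2 : Walk E q r n) : Walk E p r (m * n) := by
  induction h1 with
  | nil p => exact h2.cast (one_mul n).symm
  | cons e _ ih => exact (Walk.cons e (ih h2)).cast (mul_assoc _ _ _).symm

theorem WalkIn.append {E : Q → M → Q → Prop} {S : Set Q} :
    ∀ {p q m}, WalkIn E S p q m → ∀ {r n}, WalkIn E S q r n →
    WalkIn E (insert q S) p r (m * n) := by
  intro p q m h1
  induction h1 with
  | nil p => exact fun h2 => (h2.mono (Set.subset_insert _ _)).cast (one_mul _).symm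
  | single e => exact fun h2 => WalkIn.cons e (Set.mem_insert _ _) (h2.mono (Set.subset_insert _ _))
  | cons e hq _ ih =>
      exact fun h2 => (WalkIn.cons e (Set.mem_insert_of_mem _ hq) (ih h2)).cast
        (mul_assoc _ _ _).symm

/-- The language of walks from `p` to `q` with intermediate states in `S`. -/
def L (E : Q → M → Q → Prop) (S : Set Q) (p q : Q) : Set M := {m | WalkIn E S p q m}

theorem walkIn_insert (E : Q → M → Q → Prop) (S : Set Q) (r p q : Q) :
    L E (insert r S) p q =
      L E S p q ∪ L E S p r * (Submonoid.closure (L E S r r) : Set M) * L E S r q := by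
  ext m
  constructor
  · intro h
    show m ∈ _
    induction h with
    | nil p => exact Or.inl (WalkIn.nil p)
    | single e => exact Or.inl (WalkIn.single e)
    | @cons p s _ m₁ m₂ e hs _ ih =>
        rcases hs with rfl | hs
        · rcases ih with h2 | h2
          · exact Or.inr ⟨m₁ * 1, ⟨m₁, WalkIn.single e, 1, Submonoid.one_mem _, rfl⟩,
              m₂, h2, by rw [mul_one]⟩
          · obtain ⟨xy, ⟨x, hx, y, hy, rfl⟩, z, hz, rfl⟩ := h2
            exact Or.inr ⟨m₁ * (x * y), ⟨m₁, WalkIn.single e, x * y,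
              Submonoid.mul_mem _ (Submonoid.subset_closure hx) hy, rfl⟩, z, hz, by
                simp [mul_assoc]⟩
        · rcases ih with h2 | h2
          · exact Or.inl (WalkIn.cons e hs h2)
          · obtain ⟨xy, ⟨x, hx, y, hy, rfl⟩, z, hz, rfl⟩ := h2
            exact Or.inr ⟨m₁ * x * y, ⟨m₁ * x, WalkIn.cons e hs hx, y, hy, rfl⟩, z, hz, by
              simp [mul_assoc]⟩
  · rintro (h | ⟨xy, ⟨x, hx, y, hy, rfl⟩, z, hz, rfl⟩)
    · exact h.mono (Set.subset_insert _ _)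
    · have hy' : WalkIn E (insert r S) r r y := by
        refine Submonoid.closure_induction (fun w hw => hw.mono (Set.subset_insert _ _))
          (WalkIn.nil r) (fun a b _ _ ha hb => ?_) hy
        exact (ha.append hb).mono (by rw [Set.insert_idem])
      have h1 : WalkIn E (insert r S) p r (x * y) :=
        ((hx.mono (Set.subset_insert _ _)).append hy').mono (by rw [Set.insert_idem])
      exact (h1.append (hz.mono (Set.subset_insert _ _))).mono (by rw [Set.insert_idem])

theorem walkIn_empty_subset (E : Q → M → Q → Prop) (p q : Q) :
    L E ∅ p q ⊆ {1} ∪ {m | ∃ p q, E p m q} := by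
  intro m h
  cases h with
  | nil p => exact Or.inl rfl
  | single e => exact Or.inr ⟨_, _, e⟩
  | cons e hq _ => exact absurd hq (Set.notMem_empty _)

theorem isRational_L (E : Q → M → Q → Prop)
    (hE : {m | ∃ p q, E p m q}.Finite) {S : Set Q} (hS : S.Finite) (p q : Q) :
    IsRational (L E S p q) := by
  refine Set.Finite.induction_on (motive := fun S _ => ∀ p q, IsRational (L E S p q)) _ hS
    (fun p q => IsRational.finite _ ((Set.finite_singleton 1 |>.union hE).subset
        (walkIn_empty_subset E p q))) ?_ p q
  intro r S _ _ ih p q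
  rw [walkIn_insert]
  exact IsRational.union _ _ (ih p q)
    (IsRational.mul _ _ (IsRational.mul _ _ (ih p r) (IsRational.star _ (ih r r))) (ih r q))

/-- The language of an automaton with initial states `I` and final states `F`. -/
def Lang (E : Q → M → Q → Prop) (I F : Set Q) : Set M :=
  {m | ∃ i ∈ I, ∃ f ∈ F, Walk E i f m}

theorem isRational_lang [Finite Q] (E : Q → M → Q → Prop) (I F : Set Q)
    (hE : {m | ∃ p q, E p m q}.Finite) : IsRational (Lang E I F) := by
  have key : ∀ P : Set (Q × Q), P.Finite →
      IsRational {m | ∃ x ∈ P, WalkIn E Set.univ x.1 x.2 m} := by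
    intro P hP
    refine Set.Finite.induction_on
      (motive := fun P _ => IsRational {m | ∃ x ∈ P, WalkIn E Set.univ x.1 x.2 m}) _ hP
      (IsRational.finite _ (by simp)) ?_
    intro a P _ _ ih
    have : {m | ∃ x ∈ insert a P, WalkIn E Set.univ x.1 x.2 m} =
            L E Set.univ a.1 a.2 ∪ {m | ∃ x ∈ P, WalkIn E Set.univ x.1 x.2 m} := by
      ext m; simp [L, Set.mem_insert_iff, or_and_right, exists_or]
    rw [this]
    exact IsRational.union _ _ (isRational_L E hE (Set.toFinite _) a.1 a.2) ih
  have : Lang E I F = {m | ∃ x ∈ I ×ˢ F, WalkIn E Set.univ x.1 x.2 m} := by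
    ext m
    simp only [Lang, Set.mem_setOf_eq, Set.mem_prod, walk_iff_walkIn_univ]
    constructor
    · rintro ⟨i, hi, f, hf, h⟩; exact ⟨(i, f), ⟨hi, hf⟩, h⟩
    · rintro ⟨⟨i, f⟩, ⟨hi, hf⟩, h⟩; exact ⟨i, hi, f, hf, h⟩
  rw [this]
  exact key _ (Set.toFinite _)


/-- `s` is the language of a finite automaton with edge labels in `G`. -/
def Realizes (G : Set M) (s : Set M) : Prop :=
  ∃ (Q : Type) (_ : Finite Q) (E : Q → M → Q → Prop) (I F : Set Q),
    (∀ p m q, E p m q → m ∈ G) ∧ Lang E I F = s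

theorem walk_map {Q' : Type} {E1 : Q → M → Q → Prop} {E' : Q' → M → Q' → Prop}
    (f : Q → Q') (hE : ∀ p m q, E1 p m q → E' (f p) m (f q)) {p q : Q} {m : M}
    (h : Walk E1 p q m) : Walk E' (f p) (f q) m := by
  induction h with
  | nil p => exact Walk.nil _
  | cons e _ ih => exact Walk.cons (hE _ _ _ e) ih

section Sum

variable {Q1 Q2 : Type} {E1 : Q1 → M → Q1 → Prop} {E2 : Q2 → M → Q2 → Prop}
variable {E : Q1 ⊕ Q2 → M → Q1 ⊕ Q2 → Prop}

theorem walk_inr_proj (hnl : ∀ p m y, ¬ E (Sum.inr p) m (Sum.inl y))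
    (hE : ∀ p m q, E (Sum.inr p) m (Sum.inr q) → E2 p m q) :
    ∀ {x y : Q1 ⊕ Q2} {m : M}, Walk E x y m → ∀ p, x = Sum.inr p →
      ∃ q, y = Sum.inr q ∧ Walk E2 p q m := by
  intro x y m h
  induction h with
  | nil x => exact fun p hp => ⟨p, hp, Walk.nil p⟩
  | @cons x x' y m₁ m₂ e _ ih =>
      rintro p rfl
      cases x' with
      | inl q => exact absurd e (hnl _ _ _)
      | inr q =>
          obtain ⟨f, rfl, w⟩ := ih q rfl
          exact ⟨f, rfl, Walk.cons (hE _ _ _ e) w⟩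

theorem walk_inl_proj (hnl : ∀ p m y, ¬ E (Sum.inl p) m (Sum.inr y))
    (hE : ∀ p m q, E (Sum.inl p) m (Sum.inl q) → E1 p m q) :
    ∀ {x y : Q1 ⊕ Q2} {m : M}, Walk E x y m → ∀ p, x = Sum.inl p →
      ∃ q, y = Sum.inl q ∧ Walk E1 p q m := by
  intro x y m h
  induction h with
  | nil x => exact fun p hp => ⟨p, hp, Walk.nil p⟩
  | @cons x x' y m₁ m₂ e _ ih =>
      rintro p rfl
      cases x' with
      | inr q => exact absurd e (hnl _ _ _)
      | inl q =>
          obtain ⟨f, rfl, w⟩ := ih q rfl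
          exact ⟨f, rfl, Walk.cons (hE _ _ _ e) w⟩

end Sum

theorem Realizes.union {G s t : Set M} (h1 : Realizes G s) (h2 : Realizes G t) :
    Realizes G (s ∪ t) := by
  obtain ⟨Q1, _, E1, I1, F1, hG1, hL1⟩ := h1
  obtain ⟨Q2, _, E2, I2, F2, hG2, hL2⟩ := h2
  classical
  refine ⟨Q1 ⊕ Q2, inferInstance,
    (fun x m y => match x, y with
      | Sum.inl p, Sum.inl q => E1 p m q
      | Sum.inr p, Sum.inr q => E2 p m q
      | _, _ => False),
    Sum.inl '' I1 ∪ Sum.inr '' I2, Sum.inl '' F1 ∪ Sum.inr '' F2, ?_, ?_⟩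
  · rintro (p | p) m (q | q) h
    · exact hG1 _ _ _ h
    · exact h.elim
    · exact h.elim
    · exact hG2 _ _ _ h
  · ext m
    constructor
    · rintro ⟨i, hi, f, hf, w⟩
      rcases hi with ⟨i1, hi1, rfl⟩ | ⟨i2, hi2, rfl⟩
      · obtain ⟨q, rfl, w1⟩ := walk_inl_proj (E1 := E1) (fun _ _ _ h => h)
          (fun _ _ _ h => h) w i1 rfl
        rcases hf with ⟨f1, hf1, hf1'⟩ | ⟨f2, hf2, hf2'⟩
        · exact Or.inl (hL1 ▸ ⟨i1, hi1, q, Sum.inl_injective hf1' ▸ hf1, w1⟩)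
        · exact absurd hf2' (by simp)
      · obtain ⟨q, rfl, w2⟩ := walk_inr_proj (E2 := E2) (fun _ _ _ h => h)
          (fun _ _ _ h => h) w i2 rfl
        rcases hf with ⟨f1, hf1, hf1'⟩ | ⟨f2, hf2, hf2'⟩
        · exact absurd hf1' (by simp)
        · exact Or.inr (hL2 ▸ ⟨i2, hi2, q, Sum.inr_injective hf2' ▸ hf2, w2⟩)
    · rintro (hm | hm)
      · obtain ⟨i, hi, f, hf, w⟩ := hL1 ▸ hm
        exact ⟨Sum.inl i, Or.inl ⟨i, hi, rfl⟩, Sum.inl f, Or.inl ⟨f, hf, rfl⟩,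
          walk_map Sum.inl (fun _ _ _ h => h) w⟩
      · obtain ⟨i, hi, f, hf, w⟩ := hL2 ▸ hm
        exact ⟨Sum.inr i, Or.inr ⟨i, hi, rfl⟩, Sum.inr f, Or.inr ⟨f, hf, rfl⟩,
          walk_map Sum.inr (fun _ _ _ h => h) w⟩

theorem Realizes.mul {G s t : Set M} (hG1 : (1 : M) ∈ G)
    (h1 : Realizes G s) (h2 : Realizes G t) : Realizes G (s * t) := by
  obtain ⟨Q1, _, E1, I1, F1, hGa, hL1⟩ := h1
  obtain ⟨Q2, _, E2, I2, F2, hGb, hL2⟩ := h2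
  classical
  set E : Q1 ⊕ Q2 → M → Q1 ⊕ Q2 → Prop := fun x m y => match x, y with
      | Sum.inl p, Sum.inl q => E1 p m q
      | Sum.inr p, Sum.inr q => E2 p m q
      | Sum.inl p, Sum.inr q => p ∈ F1 ∧ q ∈ I2 ∧ m = 1
      | _, _ => False with hE
  have key : ∀ {x y : Q1 ⊕ Q2} {m : M}, Walk E x y m → ∀ p1 f2,
      x = Sum.inl p1 → y = Sum.inr f2 →
      ∃ f1 ∈ F1, ∃ i2 ∈ I2, ∃ m1 m2, m = m1 * m2 ∧ Walk E1 p1 f1 m1 ∧ Walk E2 i2 f2 m2 := by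
    intro x y m h
    induction h with
    | nil x => rintro p1 f2 rfl h; exact absurd h (by simp)
    | @cons x x' y m₁ m₂ e _ ih =>
        rintro p1 f2 rfl rfl
        cases x' with
        | inl p' =>
            obtain ⟨f1, hf1, i2, hi2, m1, m2, rfl, w1, w2⟩ := ih p' f2 rfl rfl
            exact ⟨f1, hf1, i2, hi2, m₁ * m1, m2, (mul_assoc _ _ _).symm,
              Walk.cons e w1, w2⟩
        | inr q' =>
            obtain ⟨hp, hq, rfl⟩ := e
            obtain ⟨f, hf, w2⟩ := walk_inr_proj (E2 := E2) (fun _ _ _ h => h)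
              (fun _ _ _ h => h) ‹Walk E (Sum.inr q') (Sum.inr f2) m₂› q' rfl
            cases hf
            exact ⟨p1, hp, q', hq, 1, m₂, rfl, Walk.nil p1, w2⟩
  refine ⟨Q1 ⊕ Q2, inferInstance, E, Sum.inl '' I1, Sum.inr '' F2, ?_, ?_⟩
  · rintro (p | p) m (q | q) h
    · exact hGa _ _ _ h
    · exact h.2.2 ▸ hG1
    · exact h.elim
    · exact hGb _ _ _ h
  · ext m
    constructor
    · rintro ⟨_, ⟨i1, hi1, rfl⟩, _, ⟨f2, hf2, rfl⟩, w⟩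
      obtain ⟨f1, hf1, i2, hi2, m1, m2, rfl, w1, w2⟩ := key w i1 f2 rfl rfl
      exact Set.mul_mem_mul (hL1 ▸ ⟨i1, hi1, f1, hf1, w1⟩) (hL2 ▸ ⟨i2, hi2, f2, hf2, w2⟩)
    · rintro ⟨m1, hm1, m2, hm2, rfl⟩
      obtain ⟨i1, hi1, f1, hf1, w1⟩ := hL1 ▸ hm1
      obtain ⟨i2, hi2, f2, hf2, w2⟩ := hL2 ▸ hm2
      refine ⟨Sum.inl i1, ⟨i1, hi1, rfl⟩, Sum.inr f2, ⟨f2, hf2, rfl⟩, ?_⟩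
      have wbridge : Walk E (Sum.inl f1) (Sum.inr f2) (1 * m2) :=
        Walk.cons (show E (Sum.inl f1) 1 (Sum.inr i2) from ⟨hf1, hi2, rfl⟩)
          (walk_map Sum.inr (fun _ _ _ h => h) w2)
      exact ((walk_map Sum.inl (fun _ _ _ h => h) w1).append wbridge).cast
        (by rw [one_mul])

theorem Realizes.star {G s : Set M} (hG1 : (1 : M) ∈ G) (h : Realizes G s) :
    Realizes G (Submonoid.closure s : Set M) := by
  obtain ⟨Q1, _, E1, I1, F1, hGa, hL1⟩ := h
  classical
  set E : Option Q1 → M → Option Q1 → Prop := fun x m y => match x, y with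
      | some p, some q => E1 p m q
      | none, some q => q ∈ I1 ∧ m = 1
      | some p, none => p ∈ F1 ∧ m = 1
      | none, none => False with hE
  have key : ∀ {x y : Option Q1} {m : M}, Walk E x y m → y = none →
      ((x = none → m ∈ Submonoid.closure s) ∧
        (∀ p, x = some p → ∃ m1 m2, m = m1 * m2 ∧
          (∃ f ∈ F1, Walk E1 p f m1) ∧ m2 ∈ Submonoid.closure s)) := by
    intro x y m h
    induction h with
    | nil x =>
        rintro rfl
        exact ⟨fun _ => Submonoid.one_mem _, fun p hp => by simp at hp⟩
    | @cons x x' y m₁ m₂ e _ ih =>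
        rintro rfl
        have ih := ih rfl
        constructor
        · rintro rfl
          cases x' with
          | none => exact e.elim
          | some i =>
              obtain ⟨hi, rfl⟩ := e
              obtain ⟨m1, m2, rfl, ⟨f, hf, w1⟩, hm2⟩ := ih.2 i rfl
              have hm1 : m1 ∈ s := hL1 ▸ ⟨i, hi, f, hf, w1⟩
              rw [one_mul]
              exact Submonoid.mul_mem _ (Submonoid.subset_closure hm1) hm2
        · rintro p rfl
          cases x' with
          | some p' =>
              obtain ⟨m1, m2, rfl, ⟨f, hf, w1⟩, hm2⟩ := ih.2 p' rfl
              exact ⟨m₁ * m1, m2, (mul_assoc _ _ _).symm, ⟨f, hf, Walk.cons e w1⟩, hm2⟩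
          | none =>
              obtain ⟨hp, rfl⟩ := e
              exact ⟨1, m₂, rfl, ⟨p, hp, Walk.nil p⟩, ih.1 rfl⟩
  haveI : Finite (Option Q1) := Finite.of_equiv _ (Equiv.optionEquivSumPUnit.{0,0} Q1).symm
  refine ⟨Option Q1, inferInstance, E, {none}, {none}, ?_, ?_⟩
  · rintro (_ | p) m (_ | q) h
    · exact h.elim
    · exact h.2 ▸ hG1
    · exact h.2 ▸ hG1
    · exact hGa _ _ _ h
  · ext m
    constructor
    · rintro ⟨i, rfl, f, rfl, w⟩
      exact (key w rfl).1 rfl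
    · intro hm
      refine ⟨none, rfl, none, rfl, ?_⟩
      refine Submonoid.closure_induction (fun w hw => ?_) (Walk.nil none)
        (fun a b _ _ ha hb => ha.append hb) hm
      obtain ⟨i, hi, f, hf, w1⟩ := hL1 ▸ hw
      have wend : Walk E (some f) none ((1 : M) * 1) :=
        Walk.cons (show E (some f) 1 none from ⟨hf, rfl⟩) (Walk.nil none)
      have := Walk.cons (show E none 1 (some i) from ⟨hi, rfl⟩)
        ((walk_map some (fun _ _ _ h => h) w1).append wend)
      exact this.cast (by simp)

theorem realizes_singleton {G : Set M} {g : M} (hg : g ∈ G) : Realizes G {g} := by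
  classical
  refine ⟨Bool, inferInstance, fun p m q => p = false ∧ q = true ∧ m = g,
    {false}, {true}, fun p m q h => h.2.2 ▸ hg, ?_⟩
  ext m
  constructor
  · rintro ⟨i, rfl, f, rfl, w⟩
    cases w with
    | cons e w' =>
        obtain ⟨-, rfl, he⟩ := e
        cases w' with
        | nil => simp [he]
        | cons e' _ => exact absurd e'.1 (by simp)
  · rintro rfl
    refine ⟨false, rfl, true, rfl, ?_⟩
    exact (Walk.cons (q := true) ⟨rfl, rfl, rfl⟩ (Walk.nil true)).cast (mul_one _)

theorem realizes_empty (G : Set M) : Realizes G (∅ : Set M) :=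
  ⟨Bool, inferInstance, fun _ _ _ => False, ∅, ∅, fun _ _ _ h => h.elim, by
    ext m; simp [Lang]⟩

theorem realizes_finite {G s : Set M} (hs : s.Finite) (h : ∀ x ∈ s, Realizes G {x}) :
    Realizes G s := by
  refine Set.Finite.induction_on
    (motive := fun u _ => (∀ x ∈ u, Realizes G {x}) → Realizes G u) _ hs
    (fun _ => realizes_empty G) ?_ h
  intro a u _ _ ih h'
  rw [Set.insert_eq]
  exact (h' a (Set.mem_insert _ _)).union (ih fun x hx => h' x (Set.mem_insert_of_mem _ hx))

theorem realizes_of_isRational {G : Set M} (hG1 : (1 : M) ∈ G)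
    (hsing : ∀ x : M, Realizes G {x}) {s : Set M} (h : IsRational s) : Realizes G s := by
  induction h with
  | finite s hs => exact realizes_finite hs fun x _ => hsing x
  | union s t _ _ ihs iht => exact ihs.union iht
  | mul s t _ _ ihs iht => exact ihs.mul hG1 iht
  | star s _ ihs => exact ihs.star hG1

theorem Realizes.isRational {G s : Set M} (hG : G.Finite) (h : Realizes G s) :
    IsRational s := by
  obtain ⟨Q, _, E, I, F, hGE, hL⟩ := h
  rw [← hL]
  exact isRational_lang E I F (hG.subset (by rintro m ⟨p, q, e⟩; exact hGE _ _ _ e))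


section FreeMonoidFacts

variable {α : Type}

theorem fm_toList_inj {x y : FreeMonoid α} (h : FreeMonoid.toList x = FreeMonoid.toList y) :
    x = y := h

theorem fm_mul_eq_one {x y : FreeMonoid α} (h : x * y = 1) : x = 1 ∧ y = 1 := by
  have h' := congrArg FreeMonoid.toList h
  rw [FreeMonoid.toList_mul, FreeMonoid.toList_one] at h'
  obtain ⟨h1, h2⟩ := List.append_eq_nil_iff.mp h'
  exact ⟨fm_toList_inj h1, fm_toList_inj h2⟩

theorem fm_of_mul_eq_of_mul {b b' : α} {x y : FreeMonoid α}
    (h : FreeMonoid.of b * x = FreeMonoid.of b' * y) : b = b' ∧ x = y := by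
  have h' := congrArg FreeMonoid.toList h
  simp only [FreeMonoid.toList_mul, FreeMonoid.toList_of, List.singleton_append,
    List.cons.injEq] at h'
  exact ⟨h'.1, fm_toList_inj h'.2⟩

theorem fm_of_mul_ne_one (b : α) (x : FreeMonoid α) : FreeMonoid.of b * x ≠ 1 := by
  intro h
  have h' := congrArg FreeMonoid.toList h
  rw [FreeMonoid.toList_mul, FreeMonoid.toList_of, FreeMonoid.toList_one] at h'
  simp at h'

end FreeMonoidFacts

section Gen

variable (A B : Type)

/-- The standard generators (with identity) of `A* × B*`. -/
def gen : Set (FreeMonoid A × FreeMonoid B) :=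
  ((Set.range fun a : A => (FreeMonoid.of a, 1)) ∪
    (Set.range fun b : B => ((1 : FreeMonoid A), FreeMonoid.of b))) ∪ {1}

variable {A B}

theorem one_mem_gen : (1 : FreeMonoid A × FreeMonoid B) ∈ gen A B := Or.inr rfl

theorem of_left_mem_gen (a : A) :
    ((FreeMonoid.of a, 1) : FreeMonoid A × FreeMonoid B) ∈ gen A B :=
  Or.inl (Or.inl ⟨a, rfl⟩)

theorem of_right_mem_gen (b : B) :
    (((1 : FreeMonoid A), FreeMonoid.of b) : FreeMonoid A × FreeMonoid B) ∈ gen A B :=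
  Or.inl (Or.inr ⟨b, rfl⟩)

theorem gen_finite [Finite A] [Finite B] : (gen A B).Finite :=
  ((Set.finite_range _).union (Set.finite_range _)).union (Set.finite_singleton _)

theorem mem_gen_iff {m : FreeMonoid A × FreeMonoid B} :
    m ∈ gen A B ↔ (∃ a, m = (FreeMonoid.of a, 1)) ∨
      (∃ b, m = (1, FreeMonoid.of b)) ∨ m = 1 := by
  simp only [gen, Set.mem_union, Set.mem_range, Set.mem_singleton_iff, eq_comm, or_assoc]

theorem realizes_pair_left (u : FreeMonoid A) :
    Realizes (gen A B) {((u, 1) : FreeMonoid A × FreeMonoid B)} := by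
  induction u using FreeMonoid.recOn with
  | one => exact realizes_singleton one_mem_gen
  | of_mul x xs ih =>
      have h := (realizes_singleton (of_left_mem_gen (B := B) x)).mul one_mem_gen ih
      rwa [Set.singleton_mul_singleton, Prod.mk_mul_mk, one_mul] at h

theorem realizes_pair_right (v : FreeMonoid B) :
    Realizes (gen A B) {(((1 : FreeMonoid A), v) : FreeMonoid A × FreeMonoid B)} := by
  induction v using FreeMonoid.recOn with
  | one => exact realizes_singleton one_mem_gen
  | of_mul x xs ih =>
      have h := (realizes_singleton (of_right_mem_gen (A := A) x)).mul one_mem_gen ih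
      rwa [Set.singleton_mul_singleton, Prod.mk_mul_mk, one_mul] at h

theorem realizes_pair (x : FreeMonoid A × FreeMonoid B) : Realizes (gen A B) {x} := by
  obtain ⟨u, v⟩ := x
  have h := (realizes_pair_left (B := B) u).mul one_mem_gen (realizes_pair_right (A := A) v)
  rwa [Set.singleton_mul_singleton, Prod.mk_mul_mk, one_mul, mul_one] at h

theorem isRational_realizes_gen {s : Set (FreeMonoid A × FreeMonoid B)}
    (h : IsRational s) : Realizes (gen A B) s :=
  realizes_of_isRational one_mem_gen realizes_pair h

end Gen


section Compose

variable {A B C : Type} {Q1 Q2 : Type}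
variable (E1 : Q1 → FreeMonoid A × FreeMonoid B → Q1 → Prop)
variable (E2 : Q2 → FreeMonoid B × FreeMonoid C → Q2 → Prop)

/-- The composition (product) automaton edge relation. -/
def EP : Q1 × Q2 → FreeMonoid A × FreeMonoid C → Q1 × Q2 → Prop := fun x w y =>
  (∃ a, E1 x.1 (FreeMonoid.of a, 1) y.1 ∧ x.2 = y.2 ∧ w = (FreeMonoid.of a, 1)) ∨
  (∃ c, E2 x.2 (1, FreeMonoid.of c) y.2 ∧ x.1 = y.1 ∧ w = (1, FreeMonoid.of c)) ∨
  (∃ b, E1 x.1 (1, FreeMonoid.of b) y.1 ∧ E2 x.2 (FreeMonoid.of b, 1) y.2 ∧ w = 1) ∨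
  (E1 x.1 1 y.1 ∧ x.2 = y.2 ∧ w = 1) ∨
  (E2 x.2 1 y.2 ∧ x.1 = y.1 ∧ w = 1)

variable {E1 E2}

theorem walk_ep_proj : ∀ {x y : Q1 × Q2} {w : FreeMonoid A × FreeMonoid C},
    Walk (EP E1 E2) x y w →
    ∃ m, Walk E1 x.1 y.1 (w.1, m) ∧ Walk E2 x.2 y.2 (m, w.2) := by
  intro x y w h
  induction h with
  | nil x => exact ⟨1, (Walk.nil _).cast (by simp; rfl), (Walk.nil _).cast (by simp; rfl)⟩
  | @cons x x' y l n e _ ih =>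
      obtain ⟨m, w1, w2⟩ := ih
      rcases e with ⟨a, e1, heq, rfl⟩ | ⟨c, e2, heq, rfl⟩ | ⟨b, e1, e2, rfl⟩ |
        ⟨e1, heq, rfl⟩ | ⟨e2, heq, rfl⟩
      · exact ⟨m, (Walk.cons e1 w1).cast (by simp [Prod.ext_iff]),
          (heq.symm ▸ w2).cast (by simp [Prod.ext_iff])⟩
      · exact ⟨m, (heq.symm ▸ w1).cast (by simp [Prod.ext_iff]),
          (Walk.cons e2 w2).cast (by simp [Prod.ext_iff])⟩
      · exact ⟨FreeMonoid.of b * m, (Walk.cons e1 w1).cast (by simp [Prod.ext_iff]),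
          (Walk.cons e2 w2).cast (by simp [Prod.ext_iff])⟩
      · exact ⟨m, (Walk.cons e1 w1).cast (by simp [Prod.ext_iff]),
          (heq.symm ▸ w2).cast (by simp [Prod.ext_iff])⟩
      · exact ⟨m, (heq.symm ▸ w1).cast (by simp [Prod.ext_iff]),
          (Walk.cons e2 w2).cast (by simp [Prod.ext_iff])⟩

variable (hG2 : ∀ p m q, E2 p m q → m ∈ gen B C)

include hG2 in
theorem walk_ep_lift_right : ∀ {p2 q2 : Q2} {y : FreeMonoid B × FreeMonoid C},
    Walk E2 p2 q2 y → y.1 = 1 → ∀ r1 : Q1,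
    Walk (EP E1 E2) (r1, p2) (r1, q2) (1, y.2) := by
  intro p2 q2 y h
  induction h with
  | nil p2 => exact fun h1 r1 => (Walk.nil _).cast (by simp; rfl)
  | @cons p2 p2' q2 l n e _ ih =>
      intro h1 r1
      have hln : l.1 * n.1 = 1 := h1
      obtain ⟨hl1, hn1⟩ := fm_mul_eq_one hln
      rcases mem_gen_iff.mp (hG2 _ _ _ e) with ⟨b, rfl⟩ | ⟨c, rfl⟩ | rfl
      · exact absurd (by simpa using hl1) (fm_of_mul_ne_one b 1 ∘ (by simp [mul_one]; exact ·))
      · refine (Walk.cons (show EP E1 E2 (r1, p2) (1, FreeMonoid.of c) (r1, p2') from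
          Or.inr (Or.inl ⟨c, e, rfl, rfl⟩)) (ih hn1 r1)).cast (by simp [Prod.ext_iff])
      · refine (Walk.cons (show EP E1 E2 (r1, p2) 1 (r1, p2') from
          Or.inr (Or.inr (Or.inr (Or.inr ⟨e, rfl, rfl⟩)))) (ih hn1 r1)).cast
          (by simp [Prod.ext_iff])

include hG2 in
theorem walk2_split : ∀ {p2 q2 : Q2} {y : FreeMonoid B × FreeMonoid C},
    Walk E2 p2 q2 y → ∀ (b : B) (t : FreeMonoid B), y.1 = FreeMonoid.of b * t →
    ∃ r2 s2 v1 v2, y.2 = v1 * v2 ∧ Walk E2 p2 r2 (1, v1) ∧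
      E2 r2 (FreeMonoid.of b, 1) s2 ∧ Walk E2 s2 q2 (t, v2) := by
  intro p2 q2 y h
  induction h with
  | nil p2 => exact fun b t ht => absurd ht.symm (fm_of_mul_ne_one b t)
  | @cons p2 p2' q2 l n e wtl ih =>
      intro b t ht
      rcases mem_gen_iff.mp (hG2 _ _ _ e) with ⟨b', rfl⟩ | ⟨c, rfl⟩ | rfl
      · -- l = (of b', 1)
        have h' : FreeMonoid.of b' * n.1 = FreeMonoid.of b * t := ht
        obtain ⟨rfl, hn1⟩ := fm_of_mul_eq_of_mul h'
        refine ⟨p2, p2', 1, n.2, by rfl, (Walk.nil _).cast (by rfl), e, ?_⟩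
        exact wtl.cast (by cases n; simp_all)
      · -- l = (1, of c)
        have h' : n.1 = FreeMonoid.of b * t := by simpa using ht
        obtain ⟨r2, s2, v1, v2, hy2, wpre, esync, wsuf⟩ := ih b t h'
        refine ⟨r2, s2, FreeMonoid.of c * v1, v2, ?_, ?_, esync, wsuf⟩
        · simp [Prod.snd_mul, hy2, mul_assoc]
        · exact (Walk.cons e wpre).cast (by simp [Prod.ext_iff])
      · -- l = 1
        have h' : n.1 = FreeMonoid.of b * t := by simpa using ht
        obtain ⟨r2, s2, v1, v2, hy2, wpre, esync, wsuf⟩ := ih b t h'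
        refine ⟨r2, s2, v1, v2, by simp [Prod.snd_mul, hy2], ?_, esync, wsuf⟩
        exact (Walk.cons e wpre).cast (by simp)

variable (hG1 : ∀ p m q, E1 p m q → m ∈ gen A B)

include hG1 hG2 in
theorem walk_ep_lift : ∀ {p1 q1 : Q1} {x : FreeMonoid A × FreeMonoid B},
    Walk E1 p1 q1 x → ∀ {p2 q2 : Q2} {y : FreeMonoid B × FreeMonoid C},
    Walk E2 p2 q2 y → x.2 = y.1 →
    Walk (EP E1 E2) (p1, p2) (q1, q2) (x.1, y.2) := by
  intro p1 q1 x h1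
  induction h1 with
  | nil p1 =>
      intro p2 q2 y h2 hxy
      exact (walk_ep_lift_right hG2 h2 hxy.symm p1).cast (by simp)
  | @cons p1 p1' q1 l n e _ ih =>
      intro p2 q2 y h2 hxy
      rcases mem_gen_iff.mp (hG1 _ _ _ e) with ⟨a, rfl⟩ | ⟨b, rfl⟩ | rfl
      · -- l = (of a, 1)
        have h' : n.2 = y.1 := by simpa using hxy
        refine (Walk.cons (show EP E1 E2 (p1, p2) (FreeMonoid.of a, 1) (p1', p2) from
          Or.inl ⟨a, e, rfl, rfl⟩) (ih h2 h')).cast (by simp [Prod.ext_iff])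
      · -- l = (1, of b)
        have h' : y.1 = FreeMonoid.of b * n.2 := by
          rw [← hxy]; simp [Prod.snd_mul]
        obtain ⟨r2, s2, v1, v2, hy2, wpre, esync, wsuf⟩ := walk2_split hG2 h2 b n.2 h'
        have hpre := walk_ep_lift_right (E1 := E1) hG2 wpre rfl p1
        have hsync : EP E1 E2 (p1, r2) 1 (p1', s2) :=
          Or.inr (Or.inr (Or.inl ⟨b, e, esync, rfl⟩))
        have hmain := ih wsuf rfl
        exact (hpre.append (Walk.cons hsync hmain)).cast
          (by simp [Prod.ext_iff, hy2, Prod.fst_mul, Prod.snd_mul])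
      · -- l = 1
        have h' : n.2 = y.1 := by simpa using hxy
        refine (Walk.cons (show EP E1 E2 (p1, p2) 1 (p1', p2) from
          Or.inr (Or.inr (Or.inr (Or.inl ⟨e, rfl, rfl⟩)))) (ih h2 h')).cast
          (by simp [Prod.ext_iff])

end Compose

end EM

/-- Elgot–Mezei: the composition of two rational relations is rational. -/
theorem isRational_comp {A B C : Type} [Finite A] [Finite B] [Finite C]
    (R' : Set (FreeMonoid A × FreeMonoid B)) (R : Set (FreeMonoid B × FreeMonoid C))
    (h1 : IsRational R') (h2 : IsRational R) :
    IsRational {p : FreeMonoid A × FreeMonoid C |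
      ∃ m : FreeMonoid B, (p.1, m) ∈ R' ∧ (m, p.2) ∈ R} := by
  obtain ⟨Q1, _, E1, I1, F1, hG1, hL1⟩ := EM.isRational_realizes_gen h1
  obtain ⟨Q2, _, E2, I2, F2, hG2, hL2⟩ := EM.isRational_realizes_gen h2
  have hfin : {w | ∃ p q, EM.EP E1 E2 p w q}.Finite := by
    refine EM.gen_finite.subset ?_
    rintro w ⟨p, q, e⟩
    rcases e with ⟨a, _, _, rfl⟩ | ⟨c, _, _, rfl⟩ | ⟨b, _, _, rfl⟩ | ⟨_, _, rfl⟩ | ⟨_, _, rfl⟩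
    · exact EM.of_left_mem_gen a
    · exact EM.of_right_mem_gen c
    · exact EM.one_mem_gen
    · exact EM.one_mem_gen
    · exact EM.one_mem_gen
  have key := EM.isRational_lang (EM.EP E1 E2) (I1 ×ˢ I2) (F1 ×ˢ F2) hfin
  have heq : EM.Lang (EM.EP E1 E2) (I1 ×ˢ I2) (F1 ×ˢ F2) =
      {p : FreeMonoid A × FreeMonoid C | ∃ m : FreeMonoid B,
        (p.1, m) ∈ R' ∧ (m, p.2) ∈ R} := by
    ext w
    constructor
    · rintro ⟨i, hi, f, hf, wk⟩
      obtain ⟨m, w1, w2⟩ := EM.walk_ep_proj wk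
      exact ⟨m, hL1 ▸ ⟨i.1, hi.1, f.1, hf.1, w1⟩, hL2 ▸ ⟨i.2, hi.2, f.2, hf.2, w2⟩⟩
    · rintro ⟨m, hm1, hm2⟩
      rw [← hL1] at hm1
      rw [← hL2] at hm2
      obtain ⟨i1, hi1, f1, hf1, w1⟩ := hm1
      obtain ⟨i2, hi2, f2, hf2, w2⟩ := hm2
      exact ⟨(i1, i2), ⟨hi1, hi2⟩, (f1, f2), ⟨hf1, hf2⟩,
        EM.walk_ep_lift hG2 hG1 w1 w2 rfl⟩
  rw [← heq]
  exact key
end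

section
/- In a monoid M, the intersection of a recognizable subset and a rational subset is rational. -/
open scoped Pointwise

/-- A subset of a monoid is recognizable if it is saturated by a congruence of
finite index (equivalently, it is the preimage of a subset of a finite monoid
under a monoid homomorphism). -/
def IsRecognizable {M : Type} [Monoid M] (X : Set M) : Prop :=
  ∃ c : Con M, Finite c.Quotient ∧ X = c.mk' ⁻¹' (c.mk' '' X)

section Aux

variable {M : Type} [Monoid M] {N : Type} [Monoid N] (φ : M →* N)

lemma aux_isRational_biUnion {ι : Type} {t : Set ι} (ht : t.Finite) {f : ι → Set M}
    (hf : ∀ a ∈ t, IsRational (f a)) : IsRational (⋃ a ∈ t, f a) := by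
  refine Set.Finite.induction_on
    (motive := fun t _ => (∀ a ∈ t, IsRational (f a)) → IsRational (⋃ a ∈ t, f a)) t ht
    (fun _ => by rw [Set.biUnion_empty]; exact IsRational.finite _ Set.finite_empty)
    ?_ hf
  intro a t _ _ ih hf'
  rw [Set.biUnion_insert]
  exact .union _ _ (hf' _ (Set.mem_insert _ _))
    (ih fun b hb => hf' b (Set.mem_insert_of_mem _ hb))

/-- Products of nonempty lists of elements of `s` whose partial states
(starting from `p`) stay in `S` and end at `q`. -/
def AuxPath (s : Set M) (S : Set N) (p q : N) : Set M :=
  {x | ∃ l : List M, l ≠ [] ∧ (∀ u ∈ l, u ∈ s) ∧ l.prod = x ∧ p * φ x = q ∧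
      ∀ l₁ l₂ : List M, l = l₁ ++ l₂ → l₁ ≠ [] → l₂ ≠ [] → p * φ l₁.prod ∈ S}

lemma auxPath_mono {s : Set M} {S S' : Set N} (hSS : S ⊆ S') (p q : N) :
    AuxPath φ s S p q ⊆ AuxPath φ s S' p q := by
  rintro x ⟨l, h1, h2, h3, h4, h5⟩
  exact ⟨l, h1, h2, h3, h4, fun l₁ l₂ he h₁ h₂ => hSS (h5 l₁ l₂ he h₁ h₂)⟩

lemma auxPath_comp {s : Set M} {S : Set N} {p q r : N} (hr : r ∈ S) {x y : M}
    (hx : x ∈ AuxPath φ s S p r) (hy : y ∈ AuxPath φ s S r q) :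
    x * y ∈ AuxPath φ s S p q := by
  obtain ⟨lx, hx1, hx2, hx3, hx4, hx5⟩ := hx
  obtain ⟨ly, hy1, hy2, hy3, hy4, hy5⟩ := hy
  refine ⟨lx ++ ly, by simp [hx1], ?_, by rw [List.prod_append, hx3, hy3], ?_, ?_⟩
  · intro u hu; rcases List.mem_append.1 hu with h | h
    exacts [hx2 u h, hy2 u h]
  · rw [map_mul, ← mul_assoc, hx4, hy4]
  · intro l₁ l₂ he h₁ h₂
    rcases List.append_eq_append_iff.1 he with ⟨a, ha1, ha2⟩ | ⟨c, hc1, hc2⟩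
    · -- l₁ = lx ++ a, ly = a ++ l₂
      rcases eq_or_ne a [] with rfl | hane
      · rw [ha1, List.append_nil, hx3, hx4]; exact hr
      · rw [ha1, List.prod_append, map_mul, ← mul_assoc, hx3, hx4]
        exact hy5 a l₂ ha2 hane h₂
    · -- lx = l₁ ++ c, l₂ = c ++ ly
      rcases eq_or_ne c [] with rfl | hcne
      · rw [List.append_nil] at hc1
        rw [← hc1, hx3, hx4]; exact hr
      · exact hx5 l₁ c hc1 h₁ hcne

lemma auxPath_mul_closure {s : Set M} {S : Set N} {p r : N} (hr : r ∈ S) {m : M}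
    (hm : m ∈ Submonoid.closure (AuxPath φ s S r r)) :
    ∀ x ∈ AuxPath φ s S p r, x * m ∈ AuxPath φ s S p r := by
  induction hm using Submonoid.closure_induction with
  | mem y hy => exact fun x hx => auxPath_comp φ hr hx hy
  | one => exact fun x hx => by simpa using hx
  | mul y z hy hz ihy ihz =>
      intro x hx
      rw [← mul_assoc]
      exact ihz _ (ihy x hx)

lemma auxPath_insert_aux {s : Set M} {S : Set N} {r : N} :
    ∀ n : ℕ, ∀ p q : N, ∀ l : List M, l.length ≤ n → l ≠ [] → (∀ u ∈ l, u ∈ s) →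
      p * φ l.prod = q →
      (∀ l₁ l₂ : List M, l = l₁ ++ l₂ → l₁ ≠ [] → l₂ ≠ [] → p * φ l₁.prod ∈ insert r S) →
      l.prod ∈ AuxPath φ s S p q ∪
        AuxPath φ s S p r * (Submonoid.closure (AuxPath φ s S r r) : Set M) *
          AuxPath φ s S r q := by
  intro n
  induction n with
  | zero =>
      intro p q l hl hne _ _ _
      exact absurd (List.length_eq_zero_iff.1 (Nat.le_zero.1 hl)) hne
  | succ n ih =>
      intro p q l hl hne hmem hfin hsp
      by_cases h : ∃ l₁ l₂ : List M, l = l₁ ++ l₂ ∧ l₁ ≠ [] ∧ l₂ ≠ [] ∧ p * φ l₁.prod = r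
      · classical
        have hQ : ∃ k : ℕ, ∃ l₁ l₂ : List M,
            l₁.length = k ∧ l = l₁ ++ l₂ ∧ l₁ ≠ [] ∧ l₂ ≠ [] ∧ p * φ l₁.prod = r := by
          obtain ⟨l₁, l₂, h1, h2, h3, h4⟩ := h
          exact ⟨l₁.length, l₁, l₂, rfl, h1, h2, h3, h4⟩
        obtain ⟨l₁, l₂, hk, heq, h₁ne, h₂ne, hstate⟩ := Nat.find_spec hQ
        have hmin := fun m (hm : m < Nat.find hQ) => Nat.find_min hQ hm
        have hx₁ : l₁.prod ∈ AuxPath φ s S p r := by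
          refine ⟨l₁, h₁ne, fun u hu => hmem u (heq ▸ List.mem_append_left _ hu), rfl,
            hstate, ?_⟩
          intro a b hab hane hbne
          have hsplit : l = a ++ (b ++ l₂) := by rw [heq, hab, List.append_assoc]
          have hin : p * φ a.prod ∈ insert r S :=
            hsp a (b ++ l₂) hsplit hane (by simp [hbne])
          rcases Set.mem_insert_iff.1 hin with hr' | hS
          · exfalso
            have halt : a.length < Nat.find hQ := by
              rw [← hk, hab, List.length_append]
              have : 0 < b.length := List.length_pos_iff.2 hbne
              omega
            exact hmin a.length halt ⟨a, b ++ l₂, rfl, hsplit, hane, by simp [hbne], hr'⟩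
          · exact hS
        have hl₂len : l₂.length ≤ n := by
          have := congrArg List.length heq
          rw [List.length_append] at this
          have h1 : 0 < l₁.length := List.length_pos_iff.2 h₁ne
          omega
        have hstate2 : r * φ l₂.prod = q := by
          rw [← hstate, mul_assoc, ← map_mul, ← List.prod_append, ← heq, hfin]
        have hsp2 : ∀ a b : List M, l₂ = a ++ b → a ≠ [] → b ≠ [] →
            r * φ a.prod ∈ insert r S := by
          intro a b hab hane hbne
          have hsplit : l = (l₁ ++ a) ++ b := by rw [heq, hab, List.append_assoc]
          have := hsp (l₁ ++ a) b hsplit (by simp [h₁ne]) hbne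
          rwa [List.prod_append, map_mul, ← mul_assoc, hstate] at this
        have hmem2 : ∀ u ∈ l₂, u ∈ s := fun u hu =>
          hmem u (heq ▸ List.mem_append_right _ hu)
        have hIH := ih r q l₂ hl₂len h₂ne hmem2 hstate2 hsp2
        have hprod : l.prod = l₁.prod * l₂.prod := by rw [heq, List.prod_append]
        rcases hIH with hL | hR
        · right
          have h1m : (1 : M) ∈ (Submonoid.closure (AuxPath φ s S r r) : Set M) :=
            Submonoid.one_mem _
          have heq2 : l.prod = l₁.prod * 1 * l₂.prod := by rw [mul_one, hprod]
          rw [heq2]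
          exact Set.mul_mem_mul (Set.mul_mem_mul hx₁ h1m) hL
        · right
          obtain ⟨w, hw, z, hz, hwz⟩ := Set.mem_mul.1 hR
          obtain ⟨y, hy, m, hm, hym⟩ := Set.mem_mul.1 hw
          have hym' : y * m ∈ (Submonoid.closure (AuxPath φ s S r r) : Set M) :=
            Submonoid.mul_mem _ (Submonoid.subset_closure hy) hm
          have : l.prod = l₁.prod * (y * m) * z := by
            rw [hprod, ← hwz, ← hym, mul_assoc, mul_assoc, mul_assoc]
          rw [this]
          exact Set.mul_mem_mul (Set.mul_mem_mul hx₁ hym') hz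
      · left
        refine ⟨l, hne, hmem, rfl, hfin, ?_⟩
        intro l₁ l₂ heq h₁ h₂
        rcases Set.mem_insert_iff.1 (hsp l₁ l₂ heq h₁ h₂) with hr' | hS
        · exact absurd ⟨l₁, l₂, heq, h₁, h₂, hr'⟩ h
        · exact hS

lemma auxPath_insert {s : Set M} {S : Set N} (r p q : N) :
    AuxPath φ s (insert r S) p q =
      AuxPath φ s S p q ∪
        AuxPath φ s S p r * (Submonoid.closure (AuxPath φ s S r r) : Set M) *
          AuxPath φ s S r q := by
  apply Set.Subset.antisymm
  · rintro x ⟨l, h1, h2, h3, h4, h5⟩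
    rw [← h3]
    exact auxPath_insert_aux φ l.length p q l le_rfl h1 h2 (h3 ▸ h4) h5
  · intro x hx
    have hrS : r ∈ insert r S := Set.mem_insert _ _
    rcases hx with hL | hR
    · exact auxPath_mono φ (Set.subset_insert r S) p q hL
    · obtain ⟨w, hw, z, hz, hwz⟩ := Set.mem_mul.1 hR
      obtain ⟨y, hy, m, hm, hym⟩ := Set.mem_mul.1 hw
      have hy' : y ∈ AuxPath φ s (insert r S) p r :=
        auxPath_mono φ (Set.subset_insert r S) p r hy
      have hm' : m ∈ Submonoid.closure (AuxPath φ s (insert r S) r r) :=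
        Submonoid.closure_mono (auxPath_mono φ (Set.subset_insert r S) r r) hm
      have hz' : z ∈ AuxPath φ s (insert r S) r q :=
        auxPath_mono φ (Set.subset_insert r S) r q hz
      have hw' : y * m ∈ AuxPath φ s (insert r S) p r :=
        auxPath_mul_closure φ hrS hm' y hy'
      rw [← hwz, ← hym]
      exact auxPath_comp φ hrS hw' hz'

lemma auxPath_empty (s : Set M) (p q : N) :
    AuxPath φ s (∅ : Set N) p q = ⋃ a ∈ {a : N | p * a = q}, (s ∩ φ ⁻¹' {a}) := by
  ext x
  simp only [Set.mem_iUnion, Set.mem_setOf_eq, Set.mem_inter_iff, Set.mem_preimage,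
    Set.mem_singleton_iff]
  constructor
  · rintro ⟨l, h1, h2, h3, h4, h5⟩
    obtain ⟨u, t, rfl⟩ : ∃ u t, l = u :: t := by
      cases l with
      | nil => exact absurd rfl h1
      | cons u t => exact ⟨u, t, rfl⟩
    rcases eq_or_ne t [] with rfl | htne
    · simp only [List.prod_cons, List.prod_nil, mul_one] at h3
      exact ⟨φ x, h4, ⟨h3 ▸ h2 u (by simp), rfl⟩⟩
    · exact absurd (h5 [u] t rfl (by simp) htne) (Set.notMem_empty _)
  · rintro ⟨a, ha, hxs, hxa⟩
    refine ⟨[x], by simp, by simpa using hxs, by simp, by rw [hxa]; exact ha, ?_⟩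
    intro l₁ l₂ heq h₁ h₂
    exfalso
    have := congrArg List.length heq
    simp only [List.length_cons, List.length_nil, List.length_append] at this
    have h1 : 0 < l₁.length := List.length_pos_iff.2 h₁
    have h2 : 0 < l₂.length := List.length_pos_iff.2 h₂
    omega

lemma aux_isRational_path [Finite N] {s : Set M}
    (hs : ∀ a : N, IsRational (s ∩ φ ⁻¹' {a})) (S : Finset N) :
    ∀ p q : N, IsRational (AuxPath φ s (↑S) p q) := by
  classical
  induction S using Finset.induction_on with
  | empty =>
      intro p q
      rw [Finset.coe_empty, auxPath_empty]
      exact aux_isRational_biUnion (Set.toFinite _) fun a _ => hs a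
  | @insert r S hrS ih =>
      intro p q
      rw [Finset.coe_insert, auxPath_insert]
      exact .union _ _ (ih p q)
        (.mul _ _ (.mul _ _ (ih p r) (.star _ (ih r r))) (ih r q))

lemma aux_closure_inter (s : Set M) (q : N) :
    (Submonoid.closure s : Set M) ∩ φ ⁻¹' {q} =
      AuxPath φ s Set.univ 1 q ∪ {x : M | x = 1 ∧ q = 1} := by
  ext x
  simp only [Set.mem_inter_iff, Set.mem_preimage, Set.mem_singleton_iff, Set.mem_union,
    SetLike.mem_coe, Set.mem_setOf_eq]
  constructor
  · rintro ⟨hx, hq⟩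
    obtain ⟨l, hl, hlp⟩ := Submonoid.exists_list_of_mem_closure hx
    rcases eq_or_ne l [] with rfl | hne
    · simp only [List.prod_nil] at hlp
      exact Or.inr ⟨hlp.symm, by rw [← hq, ← hlp, map_one]⟩
    · exact Or.inl ⟨l, hne, hl, hlp, by rw [one_mul, hq], fun _ _ _ _ _ => Set.mem_univ _⟩
  · rintro (⟨l, h1, h2, h3, h4, _⟩ | ⟨rfl, hq⟩)
    · refine ⟨?_, by rw [← one_mul (φ x)]; exact h4⟩
      rw [← h3]
      exact list_prod_mem fun u hu => Submonoid.subset_closure (h2 u hu)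
    · exact ⟨Submonoid.one_mem _, by rw [map_one, hq]⟩

lemma aux_key [Finite N] {Y : Set M} (hY : IsRational Y) :
    ∀ q : N, IsRational (Y ∩ φ ⁻¹' {q}) := by
  induction hY with
  | finite s hs => exact fun q => .finite _ (hs.inter_of_left _)
  | union s t _ _ ihs iht =>
      intro q
      rw [Set.union_inter_distrib_right]
      exact .union _ _ (ihs q) (iht q)
  | mul s t _ _ ihs iht =>
      intro q
      have heq : (s * t) ∩ φ ⁻¹' {q} =
          ⋃ ab ∈ {ab : N × N | ab.1 * ab.2 = q},
            (s ∩ φ ⁻¹' {ab.1}) * (t ∩ φ ⁻¹' {ab.2}) := by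
        ext x
        simp only [Set.mem_iUnion, Set.mem_setOf_eq, Set.mem_inter_iff, Set.mem_preimage,
          Set.mem_singleton_iff]
        constructor
        · rintro ⟨hx, hq⟩
          obtain ⟨u, hu, v, hv, huv⟩ := Set.mem_mul.1 hx
          refine ⟨(φ u, φ v), by rw [← map_mul, huv, hq], ?_⟩
          rw [← huv]
          exact Set.mul_mem_mul (Set.mem_inter hu rfl) (Set.mem_inter hv rfl)
        · rintro ⟨⟨a, b⟩, hab, hx⟩
          obtain ⟨u, ⟨hu, hua⟩, v, ⟨hv, hvb⟩, huv⟩ := Set.mem_mul.1 hx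
          refine ⟨huv ▸ Set.mul_mem_mul hu hv, ?_⟩
          rw [← huv, map_mul, hua, hvb]
          exact hab
      rw [heq]
      exact aux_isRational_biUnion (Set.toFinite _) fun ab _ => .mul _ _ (ihs ab.1) (iht ab.2)
  | star s _ ihs =>
      intro q
      have := Fintype.ofFinite N
      rw [aux_closure_inter]
      refine .union _ _ ?_
        (.finite _ ((Set.finite_singleton 1).subset fun x hx => hx.1))
      have : (Set.univ : Set N) = ↑(Finset.univ : Finset N) := by simp
      rw [this]
      exact aux_isRational_path φ ihs Finset.univ 1 q

end Aux

/-- The intersection of a recognizable subset and a rational subset is rational. -/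
theorem isRational_inter_recognizable {M : Type} [Monoid M] (X Y : Set M)
    (hX : IsRecognizable X) (hY : IsRational Y) : IsRational (X ∩ Y) := by
  obtain ⟨c, hfin, hsat⟩ := hX
  have heq : X ∩ Y = ⋃ q ∈ c.mk' '' X, (Y ∩ c.mk' ⁻¹' {q}) := by
    ext x
    simp only [Set.mem_iUnion, Set.mem_inter_iff, Set.mem_preimage, Set.mem_singleton_iff]
    constructor
    · rintro ⟨hxX, hxY⟩
      exact ⟨c.mk' x, Set.mem_image_of_mem _ hxX, hxY, rfl⟩
    · rintro ⟨q, hq, hxY, hxq⟩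
      refine ⟨?_, hxY⟩
      rw [hsat]
      exact Set.mem_preimage.2 (hxq ▸ hq)
  rw [heq]
  exact aux_isRational_biUnion (Set.toFinite _) fun q _ => aux_key c.mk' hY q
end

section
/- Let T ⊆ A* × A* be a relation such that (u,v) ∈ T implies |u| = |v|. Identifying each such pair with a word over the alphabet A × A via the canonical embedding (A × A)* → A* × A*, if T is a rational subset of A* × A*, then T is a rational subset of (A × A)*. -/
open scoped Pointwise

/-- The canonical embedding `(A × A)* → A* × A*`. -/
noncomputable def diagEmbedding (A : Type) :
    FreeMonoid (A × A) →* FreeMonoid A × FreeMonoid A :=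
  FreeMonoid.lift fun p => (FreeMonoid.of p.1, FreeMonoid.of p.2)

-- pure list splitting lemma
lemma list_split {α β : Type*} (a u u' g : List α) (c v v' h : List β) (w : List (α × β))
    (h1 : a ++ w.map Prod.fst = u ++ (u' ++ g))
    (h2 : c ++ w.map Prod.snd = v ++ (v' ++ h)) :
    ∃ (m : ℕ) (p : List α) (q : List β),
      m = max (u.length - a.length) (v.length - c.length) ∧
      a ++ ((w.take m).map Prod.fst) = u ++ p ∧
      p ++ ((w.drop m).map Prod.fst) = u' ++ g ∧
      c ++ ((w.take m).map Prod.snd) = v ++ q ∧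
      q ++ ((w.drop m).map Prod.snd) = v' ++ h ∧
      p.length + u.length = a.length + m ∧
      q.length + v.length = c.length + m := by
  set m := max (u.length - a.length) (v.length - c.length) with hm
  have hlen1 : a.length + w.length = u.length + (u'.length + g.length) := by
    have := congrArg List.length h1; simpa using this
  have hlen2 : c.length + w.length = v.length + (v'.length + h.length) := by
    have := congrArg List.length h2; simpa using this
  have hmw : m ≤ w.length := by
    rw [hm]; apply max_le <;> omega
  have hfsplit : (w.take m).map (Prod.fst : α × β → α) ++ (w.drop m).map Prod.fst
      = w.map Prod.fst := by
    rw [← List.map_append, List.take_append_drop]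
  have hssplit : (w.take m).map (Prod.snd : α × β → β) ++ (w.drop m).map Prod.snd
      = w.map Prod.snd := by
    rw [← List.map_append, List.take_append_drop]
  have hup : u <+: a ++ (w.take m).map Prod.fst := by
    apply List.prefix_of_prefix_length_le (l₃ := a ++ w.map Prod.fst)
    · rw [h1]; exact ⟨u' ++ g, rfl⟩
    · rw [← hfsplit, ← List.append_assoc]; exact ⟨_, rfl⟩
    · have h1' : u.length - a.length ≤ m := hm ▸ Nat.le_max_left _ _
      simp only [List.length_append, List.length_map, List.length_take]
      omega
  have hvp : v <+: c ++ (w.take m).map Prod.snd := by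
    apply List.prefix_of_prefix_length_le (l₃ := c ++ w.map Prod.snd)
    · rw [h2]; exact ⟨v' ++ h, rfl⟩
    · rw [← hssplit, ← List.append_assoc]; exact ⟨_, rfl⟩
    · have h2' : v.length - c.length ≤ m := hm ▸ Nat.le_max_right _ _
      simp only [List.length_append, List.length_map, List.length_take]
      omega
  obtain ⟨p, hp⟩ := hup
  obtain ⟨q, hq⟩ := hvp
  refine ⟨m, p, q, hm, hp.symm, ?_, hq.symm, ?_, ?_, ?_⟩
  · have : u ++ (p ++ (w.drop m).map Prod.fst) = u ++ (u' ++ g) := by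
      rw [← List.append_assoc, hp, List.append_assoc, hfsplit, h1]
    exact List.append_cancel_left this
  · have : v ++ (q ++ (w.drop m).map Prod.snd) = v ++ (v' ++ h) := by
      rw [← List.append_assoc, hq, List.append_assoc, hssplit, h2]
    exact List.append_cancel_left this
  · have := congrArg List.length hp
    simp only [List.length_append, List.length_map, List.length_take] at this
    omega
  · have := congrArg List.length hq
    simp only [List.length_append, List.length_map, List.length_take] at this
    omega

namespace EilenbergAux

variable {A : Type}

def pfst : FreeMonoid (A × A) →* FreeMonoid A := FreeMonoid.map Prod.fst
def psnd : FreeMonoid (A × A) →* FreeMonoid A := FreeMonoid.map Prod.snd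

lemma diag_apply (w : FreeMonoid (A × A)) :
    diagEmbedding A w = (pfst w, psnd w) := by
  have : diagEmbedding A = (pfst (A := A)).prod psnd :=
    FreeMonoid.hom_eq fun a => by
      simp [diagEmbedding, pfst, psnd, MonoidHom.prod_apply, FreeMonoid.map_of]
  rw [this]; rfl

/-- The padded encoding. -/
def Enc (L R : FreeMonoid A × FreeMonoid A) (S : Set (FreeMonoid A × FreeMonoid A)) :
    Set (FreeMonoid (A × A)) :=
  {w | ∃ x ∈ S, L.1 * pfst w = x.1 * R.1 ∧ L.2 * psnd w = x.2 * R.2}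

lemma Enc.mono {L R} {S S' : Set (FreeMonoid A × FreeMonoid A)} (hss : S ⊆ S') :
    Enc L R S ⊆ Enc L R S' := fun w ⟨x, hx, hc⟩ => ⟨x, hss hx, hc⟩

lemma Enc.union {L R} (S S' : Set (FreeMonoid A × FreeMonoid A)) :
    Enc L R (S ∪ S') = Enc L R S ∪ Enc L R S' := by
  ext w
  constructor
  · rintro ⟨x, hx | hx, hc⟩
    · exact Or.inl ⟨x, hx, hc⟩
    · exact Or.inr ⟨x, hx, hc⟩
  · rintro (⟨x, hx, hc⟩ | ⟨x, hx, hc⟩)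
    · exact ⟨x, Or.inl hx, hc⟩
    · exact ⟨x, Or.inr hx, hc⟩

lemma Enc.empty (L R : FreeMonoid A × FreeMonoid A) : Enc L R (∅ : Set _) = ∅ := by
  ext w; simp [Enc]

lemma Enc.mul_mem {L P R} {S T : Set (FreeMonoid A × FreeMonoid A)} {w₁ w₂}
    (h₁ : w₁ ∈ Enc L P S) (h₂ : w₂ ∈ Enc P R T) : w₁ * w₂ ∈ Enc L R (S * T) := by
  obtain ⟨x, hx, hx1, hx2⟩ := h₁
  obtain ⟨y, hy, hy1, hy2⟩ := h₂
  refine ⟨x * y, Set.mul_mem_mul hx hy, ?_, ?_⟩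
  · show L.1 * pfst (w₁ * w₂) = x.1 * y.1 * R.1
    rw [map_mul, ← mul_assoc, hx1, mul_assoc, hy1, ← mul_assoc]
  · show L.2 * psnd (w₁ * w₂) = x.2 * y.2 * R.2
    rw [map_mul, ← mul_assoc, hx2, mul_assoc, hy2, ← mul_assoc]

lemma Enc.mul_subset {L P R} (S T : Set (FreeMonoid A × FreeMonoid A)) :
    Enc L P S * Enc P R T ⊆ Enc L R (S * T) := by
  rintro w ⟨w₁, h₁, w₂, h₂, rfl⟩
  exact Enc.mul_mem h₁ h₂

lemma Enc.one_mem {P} {S : Set (FreeMonoid A × FreeMonoid A)} (hS : (1 : _) ∈ S) :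
    (1 : FreeMonoid (A × A)) ∈ Enc P P S :=
  ⟨1, hS, by simp, by simp⟩

lemma length_pfst (w : FreeMonoid (A × A)) : (pfst w).length = w.length := by
  show (FreeMonoid.toList (FreeMonoid.map Prod.fst w)).length = w.toList.length
  rw [FreeMonoid.toList_map, List.length_map]

lemma length_psnd (w : FreeMonoid (A × A)) : (psnd w).length = w.length := by
  show (FreeMonoid.toList (FreeMonoid.map Prod.snd w)).length = w.toList.length
  rw [FreeMonoid.toList_map, List.length_map]

lemma freeMonoid_length_le_finite (B : Type) [Finite B] (n : ℕ) :
    {w : FreeMonoid B | w.length ≤ n}.Finite := by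
  have h := List.finite_length_le B n
  have : {w : FreeMonoid B | w.length ≤ n} = FreeMonoid.toList ⁻¹' {l | l.length ≤ n} := rfl
  rw [this]
  exact h.preimage (FreeMonoid.toList.injective.injOn)

lemma Enc.singleton_finite [Finite A] (L R x) :
    (Enc (A := A) L R {x}).Finite := by
  apply (freeMonoid_length_le_finite (A × A) (x.1.length + R.1.length)).subset
  rintro w ⟨y, hy, h1, h2⟩
  rcases hy with rfl
  have := congrArg FreeMonoid.length h1
  rw [FreeMonoid.length_mul, FreeMonoid.length_mul, length_pfst] at this
  simp only [Set.mem_setOf_eq]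
  omega

lemma Enc.finite [Finite A] {S : Set (FreeMonoid A × FreeMonoid A)} (hS : S.Finite) (L R) :
    (Enc L R S).Finite := by
  have : Enc L R S = ⋃ x ∈ S, Enc L R {x} := by
    ext w
    simp only [Enc, Set.mem_setOf_eq, Set.mem_iUnion, Set.mem_singleton_iff]
    constructor
    · rintro ⟨x, hx, hc⟩; exact ⟨x, hx, x, rfl, hc⟩
    · rintro ⟨x, hx, y, rfl, hc⟩; exact ⟨y, hx, hc⟩
  rw [this]
  exact hS.biUnion fun x _ => Enc.singleton_finite L R x

end EilenbergAux

section Paths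
variable {M : Type} [Monoid M] {Q : Type}

open scoped Pointwise

/-- Products of edge labels along paths, with intermediate vertices restricted to `l`
(McNaughton–Yamada state elimination). -/
def W (f : Q → Q → Set M) : List Q → Q → Q → Set M
  | [], i, j => f i j
  | q :: l, i, j => W f l i j ∪ W f l i q * (Submonoid.closure (W f l q q) : Set M) * W f l q j

lemma W_rational {f : Q → Q → Set M} (hf : ∀ i j, IsRational (f i j)) :
    ∀ (l : List Q) (i j : Q), IsRational (W f l i j) := by
  intro l
  induction l with
  | nil => exact hf
  | cons q l ih =>
    intro i j
    exact .union _ _ (ih i j) (.mul _ _ (.mul _ _ (ih i q) (.star _ (ih q q))) (ih q j))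

lemma subset_W {f : Q → Q → Set M} : ∀ (l : List Q) (i j : Q), f i j ⊆ W f l i j := by
  intro l
  induction l with
  | nil => intro i j; exact subset_rfl
  | cons q l ih => intro i j; exact (ih i j).trans Set.subset_union_left

lemma W_sound {f G : Q → Q → Set M}
    (hf : ∀ i j, f i j ⊆ G i j)
    (hmul : ∀ i k j, ∀ a ∈ G i k, ∀ b ∈ G k j, a * b ∈ G i j)
    (hone : ∀ q, (1 : M) ∈ G q q) :
    ∀ (l : List Q) (i j : Q), W f l i j ⊆ G i j := by
  intro l
  induction l with
  | nil => exact hf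
  | cons q l ih =>
    intro i j
    apply Set.union_subset (ih i j)
    rintro x ⟨ab, ⟨a, ha, b, hb, rfl⟩, c, hc, rfl⟩
    have hN : b ∈ G q q := by
      let N : Submonoid M :=
        { carrier := G q q
          mul_mem' := fun hx hy => hmul q q q _ hx _ hy
          one_mem' := hone q }
      exact (Submonoid.closure_le (S := N)).mpr (ih q q) hb
    exact hmul i q j _ (hmul i q q a (ih i q ha) b hN) _ (ih q j hc)

lemma W_edge {f : Q → Q → Set M} :
    ∀ (l : List Q) (i k j : Q), k ∈ l → ∀ a ∈ f i k, ∀ b ∈ W f l k j, a * b ∈ W f l i j := by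
  intro l
  induction l with
  | nil => intro i k j hk; simp at hk
  | cons q l ih =>
    intro i k j hk a ha b hb
    rcases List.mem_cons.mp hk with rfl | hk
    · -- k = q
      rcases hb with hb | ⟨bc, ⟨b₁, hb₁, c, hc, rfl⟩, b₂, hb₂, rfl⟩
      · refine Or.inr ?_
        have : a * 1 * b ∈ W f l i k * (Submonoid.closure (W f l k k) : Set M) * W f l k j :=
          Set.mul_mem_mul (Set.mul_mem_mul (subset_W l i k ha) (Submonoid.one_mem _)) hb
        simpa using this
      · refine Or.inr ?_
        have hmid : b₁ * c ∈ (Submonoid.closure (W f l k k) : Set M) :=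
          Submonoid.mul_mem _ (Submonoid.subset_closure hb₁) hc
        have : a * (b₁ * c) * b₂ ∈ W f l i k * (Submonoid.closure (W f l k k) : Set M) * W f l k j :=
          Set.mul_mem_mul (Set.mul_mem_mul (subset_W l i k ha) hmid) hb₂
        simpa [mul_assoc] using this
    · rcases hb with hb | ⟨bc, ⟨b₁, hb₁, c, hc, rfl⟩, b₂, hb₂, rfl⟩
      · exact Or.inl (ih i k j hk a ha b hb)
      · refine Or.inr ?_
        have : (a * b₁) * c * b₂ ∈ W f l i q * (Submonoid.closure (W f l q q) : Set M) * W f l q j :=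
          Set.mul_mem_mul (Set.mul_mem_mul (ih i k q hk a ha b₁ hb₁) hc) hb₂
        simpa [mul_assoc] using this

lemma isRational_list_biUnion {g : Q → Set M} :
    ∀ l : List Q, (∀ q ∈ l, IsRational (g q)) → IsRational (⋃ q ∈ l, g q) := by
  intro l
  induction l with
  | nil =>
    intro _
    have : (⋃ q ∈ ([] : List Q), g q) = ∅ := by simp
    rw [this]; exact .finite _ Set.finite_empty
  | cons q l ih =>
    intro hl
    have : (⋃ p ∈ (q :: l : List Q), g p) = g q ∪ ⋃ p ∈ l, g p := by
      ext x; simp [List.mem_cons, or_and_right, exists_or]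
    rw [this]
    exact .union _ _ (hl q (by simp)) (ih fun p hp => hl p (List.mem_cons_of_mem _ hp))

end Paths

namespace EilenbergAux

variable {A : Type}

/-- Splitting a padded encoding of a product of two pairs. -/
lemma Enc.split {L R x y : FreeMonoid A × FreeMonoid A} {w : FreeMonoid (A × A)}
    (hw : w ∈ Enc L R {x * y}) :
    ∃ (P : FreeMonoid A × FreeMonoid A) (m : ℕ),
      m = max (x.1.length - L.1.length) (x.2.length - L.2.length) ∧
      P.1.length + x.1.length = L.1.length + m ∧
      P.2.length + x.2.length = L.2.length + m ∧
      w ∈ Enc L P {x} * Enc P R {y} := by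
  obtain ⟨z, hz, h1, h2⟩ := hw
  rcases hz with rfl
  have H1 : L.1.toList ++ w.toList.map Prod.fst = x.1.toList ++ (y.1.toList ++ R.1.toList) := by
    have := congrArg FreeMonoid.toList h1
    simpa [FreeMonoid.toList_mul, pfst, FreeMonoid.toList_map, List.append_assoc] using this
  have H2 : L.2.toList ++ w.toList.map Prod.snd = x.2.toList ++ (y.2.toList ++ R.2.toList) := by
    have := congrArg FreeMonoid.toList h2
    simpa [FreeMonoid.toList_mul, psnd, FreeMonoid.toList_map, List.append_assoc] using this
  obtain ⟨m, p, q, hm, e1, e2, e3, e4, lp, lq⟩ :=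
    list_split L.1.toList x.1.toList y.1.toList R.1.toList
      L.2.toList x.2.toList y.2.toList R.2.toList w.toList H1 H2
  refine ⟨(FreeMonoid.ofList p, FreeMonoid.ofList q), m, hm, lp, lq, ?_⟩
  refine Set.mem_mul.mpr ⟨FreeMonoid.ofList (w.toList.take m), ?_,
    FreeMonoid.ofList (w.toList.drop m), ?_, ?_⟩
  · refine ⟨x, rfl, ?_, ?_⟩
    · exact FreeMonoid.toList.injective (by simpa [FreeMonoid.toList_mul, pfst,
        FreeMonoid.toList_map] using e1)
    · exact FreeMonoid.toList.injective (by simpa [FreeMonoid.toList_mul, psnd,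
        FreeMonoid.toList_map] using e3)
  · refine ⟨y, rfl, ?_, ?_⟩
    · exact FreeMonoid.toList.injective (by simpa [FreeMonoid.toList_mul, pfst,
        FreeMonoid.toList_map, List.append_assoc] using e2)
    · exact FreeMonoid.toList.injective (by simpa [FreeMonoid.toList_mul, psnd,
        FreeMonoid.toList_map, List.append_assoc] using e4)
  · exact FreeMonoid.toList.injective (by
      simp [FreeMonoid.toList_mul, List.take_append_drop])

/-- Pad bounds coming out of `Enc.split`. -/
lemma pad_bound_main {la lb u v m p q : ℕ} {d : ℤ}
    (hm : m = max (u - la) (v - lb))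
    (hp : p + u = la + m) (hq : q + v = lb + m)
    (hd : (u : ℤ) - (v : ℤ) = d) :
    p ≤ la + d.natAbs ∧ q ≤ lb + d.natAbs := by
  rcases Nat.le_total (u - la) (v - lb) with h | h
  · rw [max_eq_right h] at hm; omega
  · rw [max_eq_left h] at hm; omega

lemma pad_set_finite [Finite A] (B1 B2 : ℕ) :
    {P : FreeMonoid A × FreeMonoid A | P.1.length ≤ B1 ∧ P.2.length ≤ B2}.Finite := by
  have : {P : FreeMonoid A × FreeMonoid A | P.1.length ≤ B1 ∧ P.2.length ≤ B2}
      = {u : FreeMonoid A | u.length ≤ B1} ×ˢ {v : FreeMonoid A | v.length ≤ B2} := by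
    ext ⟨u, v⟩; simp [Set.mem_prod]
  rw [this]
  exact (freeMonoid_length_le_finite A B1).prod (freeMonoid_length_le_finite A B2)

lemma delta_mul (x y : FreeMonoid A × FreeMonoid A) :
    ((x * y).1.length : ℤ) - (x * y).2.length
      = ((x.1.length : ℤ) - x.2.length) + ((y.1.length : ℤ) - y.2.length) := by
  show (((x.1 * y.1).length : ℤ)) - ((x.2 * y.2).length) = _
  rw [FreeMonoid.length_mul, FreeMonoid.length_mul]
  push_cast; ring

end EilenbergAux

namespace EilenbergAux

variable {A : Type} [Finite A]

lemma closure_mul_subset (s : Set (FreeMonoid A × FreeMonoid A)) :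
    (Submonoid.closure s : Set (FreeMonoid A × FreeMonoid A))
        * (Submonoid.closure s : Set (FreeMonoid A × FreeMonoid A))
      ⊆ (Submonoid.closure s : Set (FreeMonoid A × FreeMonoid A)) := by
  rintro z ⟨x, hx, y, hy, rfl⟩
  exact Submonoid.mul_mem _ hx hy

lemma key (S : Set (FreeMonoid A × FreeMonoid A)) (hS : IsRational S) :
    ∀ d : ℤ, (∀ x ∈ S, (x.1.length : ℤ) - x.2.length = d) →
      ∀ L R : FreeMonoid A × FreeMonoid A, IsRational (Enc L R S) := by
  induction hS with
  | finite s hs => exact fun d _ L R => .finite _ (Enc.finite hs L R)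
  | union s t hs ht ihs iht =>
    intro d hd L R
    rw [Enc.union]
    exact .union _ _ (ihs d (fun x hx => hd x (Or.inl hx)) L R)
      (iht d (fun x hx => hd x (Or.inr hx)) L R)
  | mul s t hs ht ihs iht =>
    intro d hd L R
    rcases Set.eq_empty_or_nonempty s with rfl | ⟨x₀, hx₀⟩
    · rw [Set.empty_mul, Enc.empty]; exact .finite _ Set.finite_empty
    rcases Set.eq_empty_or_nonempty t with rfl | ⟨y₀, hy₀⟩
    · rw [Set.mul_empty, Enc.empty]; exact .finite _ Set.finite_empty
    set d₂ : ℤ := (y₀.1.length : ℤ) - y₀.2.length with hd₂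
    have hds : ∀ x ∈ s, (x.1.length : ℤ) - x.2.length = d - d₂ := by
      intro x hx
      have := hd (x * y₀) (Set.mul_mem_mul hx hy₀)
      rw [delta_mul] at this; omega
    have hdt : ∀ y ∈ t, (y.1.length : ℤ) - y.2.length = d₂ := by
      intro y hy
      have := hd (x₀ * y) (Set.mul_mem_mul hx₀ hy)
      rw [delta_mul, hds x₀ hx₀] at this; omega
    set B1 := L.1.length + (d - d₂).natAbs with hB1
    set B2 := L.2.length + (d - d₂).natAbs with hB2
    have hfin := pad_set_finite (A := A) B1 B2
    set l := hfin.toFinset.toList with hl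
    have hmem : ∀ P : FreeMonoid A × FreeMonoid A,
        P ∈ l ↔ (P.1.length ≤ B1 ∧ P.2.length ≤ B2) := fun P => by
      rw [hl, Finset.mem_toList, Set.Finite.mem_toFinset]; rfl
    have claim : Enc L R (s * t) = ⋃ p ∈ l, Enc L p s * Enc p R t := by
      apply Set.Subset.antisymm
      · rintro w ⟨z, hz, c1, c2⟩
        obtain ⟨x, hx, y, hy, rfl⟩ := Set.mem_mul.mp hz
        have hw : w ∈ Enc L R {x * y} := ⟨x * y, rfl, c1, c2⟩
        obtain ⟨P, m, hm, hp, hq, hw'⟩ := Enc.split hw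
        have hbd := pad_bound_main hm hp hq (hds x hx)
        refine Set.mem_biUnion ((hmem P).mpr ⟨hbd.1, hbd.2⟩) ?_
        exact Set.mul_subset_mul
          (Enc.mono (Set.singleton_subset_iff.mpr hx))
          (Enc.mono (Set.singleton_subset_iff.mpr hy)) hw'
      · exact Set.iUnion₂_subset fun p _ => Enc.mul_subset s t
    rw [claim]
    exact isRational_list_biUnion l fun p _ =>
      .mul _ _ (ihs (d - d₂) hds L p) (iht d₂ hdt p R)
  | star s hs ih =>
    intro d hd L R
    have hd0 : d = 0 := by
      have := hd 1 (Submonoid.one_mem _)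
      simpa using this.symm
    subst hd0
    have hδs : ∀ x ∈ s, (x.1.length : ℤ) - x.2.length = 0 := fun x hx =>
      hd x (Submonoid.subset_closure hx)
    have hfin := pad_set_finite (A := A) L.1.length L.2.length
    set l := hfin.toFinset.toList with hl
    have hmem : ∀ P : FreeMonoid A × FreeMonoid A,
        P ∈ l ↔ (P.1.length ≤ L.1.length ∧ P.2.length ≤ L.2.length) := fun P => by
      rw [hl, Finset.mem_toList, Set.Finite.mem_toFinset]; rfl
    set f : (FreeMonoid A × FreeMonoid A) → (FreeMonoid A × FreeMonoid A) →
        Set (FreeMonoid (A × A)) := fun p q => Enc p q s with hf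
    have hfr : ∀ p q, IsRational (f p q) := fun p q => ih 0 hδs p q
    have complete : ∀ xs : List (FreeMonoid A × FreeMonoid A), (∀ z ∈ xs, z ∈ s) →
        ∀ P : FreeMonoid A × FreeMonoid A,
        P.1.length ≤ L.1.length → P.2.length ≤ L.2.length → ∀ w,
        w ∈ Enc P R {xs.prod} →
        w ∈ Enc P R {1} ∪ ⋃ p ∈ l, W f l P p * Enc p R {1} := by
      intro xs
      induction xs with
      | nil =>
        intro _ P _ _ w hw
        left; simpa using hw
      | cons z xs ihc =>
        intro hzs P hP1 hP2 w hw
        rw [List.prod_cons] at hw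
        obtain ⟨P', m, hm, hp, hq, hw'⟩ := Enc.split hw
        have hbd := pad_bound_main hm hp hq (hδs z (hzs z (List.mem_cons_self)))
        simp only [Int.natAbs_zero, Nat.add_zero] at hbd
        have hP'1 : P'.1.length ≤ L.1.length := le_trans hbd.1 hP1
        have hP'2 : P'.2.length ≤ L.2.length := le_trans hbd.2 hP2
        have hP'l : P' ∈ l := (hmem P').mpr ⟨hP'1, hP'2⟩
        obtain ⟨w₁, hw₁, w₂, hw₂, rfl⟩ := Set.mem_mul.mp hw'
        have hw₁' : w₁ ∈ f P P' :=
          Enc.mono (Set.singleton_subset_iff.mpr (hzs z (List.mem_cons_self))) hw₁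
        rcases ihc (fun z' hz' => hzs z' (List.mem_cons_of_mem _ hz')) P' hP'1 hP'2 w₂ hw₂
          with h2 | h2
        · right
          exact Set.mem_biUnion hP'l (Set.mul_mem_mul (subset_W l P P' hw₁') h2)
        · right
          rw [Set.mem_iUnion₂] at h2
          obtain ⟨p, hpmem, h2⟩ := h2
          obtain ⟨b, hb, cfin, hcf, rfl⟩ := Set.mem_mul.mp h2
          refine Set.mem_biUnion hpmem ?_
          have : (w₁ * b) * cfin ∈ W f l P p * Enc p R {1} :=
            Set.mul_mem_mul (W_edge l P P' p hP'l w₁ hw₁' b hb) hcf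
          simpa [mul_assoc] using this
    have claim : Enc L R (Submonoid.closure s : Set (FreeMonoid A × FreeMonoid A))
        = Enc L R {1} ∪ ⋃ p ∈ l, W f l L p * Enc p R {1} := by
      apply Set.Subset.antisymm
      · rintro w ⟨x, hx, c1, c2⟩
        obtain ⟨xs, hxs, hprod⟩ := Submonoid.exists_list_of_mem_closure hx
        exact complete xs hxs L le_rfl le_rfl w
          ⟨xs.prod, rfl, by rw [hprod]; exact c1, by rw [hprod]; exact c2⟩
      · apply Set.union_subset
        · exact Enc.mono (Set.singleton_subset_iff.mpr (Submonoid.one_mem _))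
        · refine Set.iUnion₂_subset fun p _ => ?_
          have h1 : W f l L p ⊆ Enc L p (Submonoid.closure s :
              Set (FreeMonoid A × FreeMonoid A)) := by
            refine W_sound (f := f) (G := fun i j => Enc i j (Submonoid.closure s :
              Set (FreeMonoid A × FreeMonoid A))) ?_ ?_ ?_ l L p
            · exact fun i j => Enc.mono Submonoid.subset_closure
            · intro i k j a ha b hb
              exact Enc.mono (closure_mul_subset s) (Enc.mul_mem ha hb)
            · exact fun q => Enc.one_mem (Submonoid.one_mem _)
          have h2 : Enc p R {1} ⊆ Enc p R (Submonoid.closure s :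
              Set (FreeMonoid A × FreeMonoid A)) :=
            Enc.mono (Set.singleton_subset_iff.mpr (Submonoid.one_mem _))
          refine Set.Subset.trans (Set.mul_subset_mul h1 h2) ?_
          refine Set.Subset.trans (Enc.mul_subset _ _) (Enc.mono (closure_mul_subset s))
    rw [claim]
    refine .union _ _ (.finite _ (Enc.finite (Set.finite_singleton 1) L R)) ?_
    exact isRational_list_biUnion l fun p _ =>
      .mul _ _ (W_rational hfr l L p) (.finite _ (Enc.finite (Set.finite_singleton 1) p R))

end EilenbergAux

/-- Eilenberg: a length-preserving rational relation on `A* × A*` is rational as a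
subset of `(A × A)*` (via the canonical identification). -/
theorem isRational_of_length_preserving {A : Type} [Finite A]
    (T : Set (FreeMonoid A × FreeMonoid A))
    (hlen : ∀ p ∈ T, (p.1 : FreeMonoid A).length = p.2.length)
    (hT : IsRational T) :
    IsRational (diagEmbedding A ⁻¹' T : Set (FreeMonoid (A × A))) := by
  open EilenbergAux in
  have h0 : ∀ x ∈ T, (x.1.length : ℤ) - x.2.length = 0 := fun x hx => by
    rw [hlen x hx]; ring
  have hkey := EilenbergAux.key T hT 0 h0 (1, 1) (1, 1)
  have heq : diagEmbedding A ⁻¹' T = EilenbergAux.Enc (1, 1) (1, 1) T := by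
    ext w
    rw [Set.mem_preimage, EilenbergAux.diag_apply]
    constructor
    · intro hw
      exact ⟨(EilenbergAux.pfst w, EilenbergAux.psnd w), hw, by simp, by simp⟩
    · rintro ⟨x, hx, h1, h2⟩
      simp only [one_mul, mul_one] at h1 h2
      have : (EilenbergAux.pfst w, EilenbergAux.psnd w) = x := Prod.ext h1 h2
      rw [this]; exact hx
  rw [heq]; exact hkey
end

section
/- Every subgroup of a finitely generated free group F(A) that is a rational subset of F(A) is finitely generated. Consequently, every group admitting a presentation ⟨A ; R⟩ with A finite and R generating a normal subgroup that is a rational subset of F(A) is finitely presented. -/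
open scoped Pointwise

section Aut
variable {G : Type} [Monoid G]


structure GAut (G : Type) [Monoid G] where
  Q : Type
  fin : Finite Q
  init : Set Q
  acc : Set Q
  step : Q → Q → Set G
  stepFin : ∀ q q', (step q q').Finite

inductive GAut.Reach (M : GAut G) : M.Q → G → M.Q → Prop
  | refl (q) : GAut.Reach M q 1 q
  | cons {q q' q'' : M.Q} {g h : G} : g ∈ M.step q q' → GAut.Reach M q' h q'' →
      GAut.Reach M q (g * h) q''

def GAut.lang (M : GAut G) : Set G := {g | ∃ i ∈ M.init, ∃ f ∈ M.acc, M.Reach i g f}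

theorem GAut.Reach.append {M : GAut G} {q q' q'' : M.Q} {a b : G}
    (h1 : M.Reach q a q') (h2 : M.Reach q' b q'') : M.Reach q (a * b) q'' := by
  induction h1 with
  | refl q => simpa using h2
  | cons e _ ih => rw [mul_assoc]; exact .cons e (ih h2)

/-! ### finite sets -/

def GAut.ofFinite (s : Set G) (hs : s.Finite) : GAut G where
  Q := Bool
  fin := inferInstance
  init := {false}
  acc := {true}
  step := fun a b => {g | a = false ∧ b = true ∧ g ∈ s}
  stepFin := fun _ _ => hs.subset (fun _ hg => hg.2.2)

theorem GAut.ofFinite_lang (s : Set G) (hs : s.Finite) : (GAut.ofFinite s hs).lang = s := by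
  ext g
  constructor
  · rintro ⟨i, hi, f, hf, hr⟩
    simp only [ofFinite, Set.mem_singleton_iff] at hi hf
    subst hi; subst hf
    match hr with
    | .cons e hr =>
      obtain ⟨-, rfl, hgs⟩ := e
      match hr with
      | .refl _ => simpa using hgs
      | .cons e' hr' => exact absurd e'.1 (by simp)
  · intro hg
    refine ⟨false, rfl, true, rfl, ?_⟩
    have : (GAut.ofFinite s hs).Reach false (g * 1) true :=
      .cons (q' := true) ⟨rfl, rfl, hg⟩ (GAut.Reach.refl (M := GAut.ofFinite s hs) true)
    simpa using this

/-! ### union -/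

def GAut.union (M₁ M₂ : GAut G) : GAut G where
  Q := M₁.Q ⊕ M₂.Q
  fin := by have := M₁.fin; have := M₂.fin; infer_instance
  init := Sum.inl '' M₁.init ∪ Sum.inr '' M₂.init
  acc := Sum.inl '' M₁.acc ∪ Sum.inr '' M₂.acc
  step := fun a b =>
    match a, b with
    | .inl a, .inl b => M₁.step a b
    | .inr a, .inr b => M₂.step a b
    | _, _ => ∅
  stepFin := fun a b =>
    match a, b with
    | .inl a, .inl b => M₁.stepFin a b
    | .inr a, .inr b => M₂.stepFin a b
    | .inl _, .inr _ => Set.finite_empty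
    | .inr _, .inl _ => Set.finite_empty

theorem GAut.union_reach_inl {M₁ M₂ : GAut G} {q c : (M₁.union M₂).Q} {g : G}
    (h : (M₁.union M₂).Reach q g c) :
    ∀ a, q = Sum.inl a → ∃ b, c = Sum.inl b ∧ M₁.Reach a g b := by
  induction h with
  | refl q => rintro a rfl; exact ⟨a, rfl, .refl a⟩
  | @cons q q' q'' x h e hr ih =>
    rintro a rfl
    cases q' with
    | inl b =>
      obtain ⟨b', rfl, hr'⟩ := ih b rfl
      exact ⟨b', rfl, .cons e hr'⟩
    | inr b => exact e.elim

theorem GAut.union_reach_inr {M₁ M₂ : GAut G} {q c : (M₁.union M₂).Q} {g : G}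
    (h : (M₁.union M₂).Reach q g c) :
    ∀ a, q = Sum.inr a → ∃ b, c = Sum.inr b ∧ M₂.Reach a g b := by
  induction h with
  | refl q => rintro a rfl; exact ⟨a, rfl, .refl a⟩
  | @cons q q' q'' x h e hr ih =>
    rintro a rfl
    cases q' with
    | inr b =>
      obtain ⟨b', rfl, hr'⟩ := ih b rfl
      exact ⟨b', rfl, .cons e hr'⟩
    | inl b => exact e.elim

theorem GAut.union_reach_of_inl {M₁ M₂ : GAut G} {a b : M₁.Q} {g : G}
    (h : M₁.Reach a g b) : (M₁.union M₂).Reach (.inl a) g (.inl b) := by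
  induction h with
  | refl q => exact .refl _
  | @cons q q' q'' x h e hr ih =>
    exact .cons (show x ∈ (M₁.union M₂).step (Sum.inl q) (Sum.inl q') from e) ih

theorem GAut.union_reach_of_inr {M₁ M₂ : GAut G} {a b : M₂.Q} {g : G}
    (h : M₂.Reach a g b) : (M₁.union M₂).Reach (.inr a) g (.inr b) := by
  induction h with
  | refl q => exact .refl _
  | @cons q q' q'' x h e hr ih =>
    exact .cons (show x ∈ (M₁.union M₂).step (Sum.inr q) (Sum.inr q') from e) ih

theorem GAut.union_lang (M₁ M₂ : GAut G) : (M₁.union M₂).lang = M₁.lang ∪ M₂.lang := by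
  ext g
  constructor
  · rintro ⟨i, hi, f, hf, hr⟩
    rcases hi with ⟨i₁, hi₁, rfl⟩ | ⟨i₂, hi₂, rfl⟩
    · obtain ⟨b, rfl, hr'⟩ := GAut.union_reach_inl hr i₁ rfl
      rcases hf with ⟨f₁, hf₁, hEq⟩ | ⟨f₂, hf₂, hEq⟩
      · injection hEq with h2; subst h2; exact Or.inl ⟨i₁, hi₁, f₁, hf₁, hr'⟩
      · simp at hEq
    · obtain ⟨b, rfl, hr'⟩ := GAut.union_reach_inr hr i₂ rfl
      rcases hf with ⟨f₁, hf₁, hEq⟩ | ⟨f₂, hf₂, hEq⟩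
      · simp at hEq
      · injection hEq with h2; subst h2; exact Or.inr ⟨i₂, hi₂, f₂, hf₂, hr'⟩
  · rintro (⟨i, hi, f, hf, hr⟩ | ⟨i, hi, f, hf, hr⟩)
    · exact ⟨.inl i, Or.inl ⟨i, hi, rfl⟩, .inl f, Or.inl ⟨f, hf, rfl⟩, GAut.union_reach_of_inl hr⟩
    · exact ⟨.inr i, Or.inr ⟨i, hi, rfl⟩, .inr f, Or.inr ⟨f, hf, rfl⟩, GAut.union_reach_of_inr hr⟩


/-! ### product -/

def GAut.prod (M₁ M₂ : GAut G) : GAut G where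
  Q := M₁.Q ⊕ M₂.Q
  fin := by have := M₁.fin; have := M₂.fin; infer_instance
  init := Sum.inl '' M₁.init
  acc := Sum.inr '' M₂.acc
  step := fun a b =>
    match a, b with
    | .inl a, .inl b => M₁.step a b
    | .inr a, .inr b => M₂.step a b
    | .inl a, .inr b => {g | g = 1 ∧ a ∈ M₁.acc ∧ b ∈ M₂.init}
    | .inr _, .inl _ => ∅
  stepFin := fun a b =>
    match a, b with
    | .inl a, .inl b => M₁.stepFin a b
    | .inr a, .inr b => M₂.stepFin a b
    | .inl _, .inr _ => (Set.finite_singleton 1).subset (fun _ hg => hg.1)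
    | .inr _, .inl _ => Set.finite_empty

theorem GAut.prod_reach_of_inl {M₁ M₂ : GAut G} {a b : M₁.Q} {g : G}
    (h : M₁.Reach a g b) : (M₁.prod M₂).Reach (.inl a) g (.inl b) := by
  induction h with
  | refl q => exact .refl _
  | @cons q q' q'' x h e hr ih =>
    exact .cons (show x ∈ (M₁.prod M₂).step (Sum.inl q) (Sum.inl q') from e) ih

theorem GAut.prod_reach_of_inr {M₁ M₂ : GAut G} {a b : M₂.Q} {g : G}
    (h : M₂.Reach a g b) : (M₁.prod M₂).Reach (.inr a) g (.inr b) := by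
  induction h with
  | refl q => exact .refl _
  | @cons q q' q'' x h e hr ih =>
    exact .cons (show x ∈ (M₁.prod M₂).step (Sum.inr q) (Sum.inr q') from e) ih

theorem GAut.prod_reach_inr {M₁ M₂ : GAut G} {q c : (M₁.prod M₂).Q} {g : G}
    (h : (M₁.prod M₂).Reach q g c) :
    ∀ a, q = Sum.inr a → ∃ b, c = Sum.inr b ∧ M₂.Reach a g b := by
  induction h with
  | refl q => rintro a rfl; exact ⟨a, rfl, .refl a⟩
  | @cons q q' q'' x h e hr ih =>
    rintro a rfl
    cases q' with
    | inr b =>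
      obtain ⟨b', rfl, hr'⟩ := ih b rfl
      exact ⟨b', rfl, .cons e hr'⟩
    | inl b => exact e.elim

theorem GAut.prod_reach_inl {M₁ M₂ : GAut G} {q c : (M₁.prod M₂).Q} {g : G}
    (h : (M₁.prod M₂).Reach q g c) :
    ∀ a, q = Sum.inl a →
      (∃ b, c = Sum.inl b ∧ M₁.Reach a g b) ∨
      (∃ g₁ g₂ b i₂ f₂, g = g₁ * g₂ ∧ M₁.Reach a g₁ b ∧ b ∈ M₁.acc ∧ i₂ ∈ M₂.init ∧
        c = Sum.inr f₂ ∧ M₂.Reach i₂ g₂ f₂) := by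
  induction h with
  | refl q => rintro a rfl; exact Or.inl ⟨a, rfl, .refl a⟩
  | @cons q q' q'' x h e hr ih =>
    rintro a rfl
    cases q' with
    | inl b =>
      rcases ih b rfl with ⟨b', rfl, hr'⟩ | ⟨g₁, g₂, b', i₂, f₂, rfl, h1, h2, h3, rfl, h4⟩
      · exact Or.inl ⟨b', rfl, .cons e hr'⟩
      · exact Or.inr ⟨x * g₁, g₂, b', i₂, f₂, by rw [mul_assoc], .cons e h1, h2, h3, rfl, h4⟩
    | inr b =>
      obtain ⟨rfl, hacc, hinit⟩ := e
      obtain ⟨f₂, rfl, hr₂⟩ := GAut.prod_reach_inr hr b rfl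
      exact Or.inr ⟨1, h, a, b, f₂, rfl, .refl a, hacc, hinit, rfl, hr₂⟩

theorem GAut.prod_lang (M₁ M₂ : GAut G) : (M₁.prod M₂).lang = M₁.lang * M₂.lang := by
  ext g
  constructor
  · rintro ⟨i, ⟨i₁, hi₁, rfl⟩, f, ⟨f₂, hf₂, rfl⟩, hr⟩
    rcases GAut.prod_reach_inl hr i₁ rfl with ⟨b, hb, -⟩ | ⟨g₁, g₂, b, i₂, f₂', rfl, h1, h2, h3, hEq, h4⟩
    · simp at hb
    · injection hEq with h5; subst h5
      exact Set.mul_mem_mul ⟨i₁, hi₁, b, h2, h1⟩ ⟨i₂, h3, _, hf₂, h4⟩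
  · rintro ⟨x, ⟨i₁, hi₁, f₁, hf₁, hr₁⟩, y, ⟨i₂, hi₂, f₂, hf₂, hr₂⟩, rfl⟩
    refine ⟨.inl i₁, ⟨i₁, hi₁, rfl⟩, .inr f₂, ⟨f₂, hf₂, rfl⟩, ?_⟩
    have step1 : (M₁.prod M₂).Reach (.inl f₁) (1 * y) (.inr f₂) :=
      .cons (q' := Sum.inr i₂)
        (show (1:G) ∈ (M₁.prod M₂).step (Sum.inl f₁) (Sum.inr i₂) from ⟨rfl, hf₁, hi₂⟩)
        (GAut.prod_reach_of_inr hr₂)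
    have := (GAut.prod_reach_of_inl (M₂ := M₂) hr₁).append step1
    simpa using this

/-! ### star -/

def GAut.star (M₁ : GAut G) : GAut G where
  Q := Option M₁.Q
  fin := by haveI := M₁.fin; exact Finite.of_equiv _ (Equiv.optionEquivSumPUnit.{0,0} M₁.Q).symm
  init := {none}
  acc := {none}
  step := fun a b =>
    match a, b with
    | none, some b => {g | g = 1 ∧ b ∈ M₁.init}
    | some a, none => {g | g = 1 ∧ a ∈ M₁.acc}
    | some a, some b => M₁.step a b
    | none, none => ∅
  stepFin := fun a b =>
    match a, b with
    | none, some _ => (Set.finite_singleton 1).subset (fun _ hg => hg.1)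
    | some _, none => (Set.finite_singleton 1).subset (fun _ hg => hg.1)
    | some a, some b => M₁.stepFin a b
    | none, none => Set.finite_empty

theorem GAut.star_reach_of_some {M₁ : GAut G} {a b : M₁.Q} {g : G}
    (h : M₁.Reach a g b) : M₁.star.Reach (some a) g (some b) := by
  induction h with
  | refl q => exact .refl _
  | @cons q q' q'' x h e hr ih =>
    exact .cons (show x ∈ M₁.star.step (some q) (some q') from e) ih

theorem GAut.star_reach_none {M₁ : GAut G} {q c : M₁.star.Q} {g : G}
    (h : M₁.star.Reach q g c) : c = none →
    (q = none → g ∈ Submonoid.closure M₁.lang) ∧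
    (∀ a, q = some a → ∃ g₁ g₂ f, g = g₁ * g₂ ∧ M₁.Reach a g₁ f ∧ f ∈ M₁.acc ∧
      g₂ ∈ Submonoid.closure M₁.lang) := by
  induction h with
  | refl q =>
    rintro rfl
    refine ⟨fun _ => one_mem _, ?_⟩
    rintro a h; exact absurd h (by simp)
  | @cons q q' q'' x h e hr ih =>
    rintro rfl
    constructor
    · rintro rfl
      cases q' with
      | none => exact e.elim
      | some b =>
        obtain ⟨rfl, hinit⟩ := e
        obtain ⟨g₁, g₂, f, rfl, h1, h2, h3⟩ := (ih rfl).2 b rfl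
        have hg₁ : g₁ ∈ M₁.lang := ⟨b, hinit, f, h2, h1⟩
        rw [one_mul]
        exact mul_mem (Submonoid.subset_closure hg₁) h3
    · rintro a rfl
      cases q' with
      | none =>
        obtain ⟨rfl, hacc⟩ := e
        have := (ih rfl).1 rfl
        exact ⟨1, h, a, rfl, .refl a, hacc, this⟩
      | some b =>
        obtain ⟨g₁, g₂, f, rfl, h1, h2, h3⟩ := (ih rfl).2 b rfl
        exact ⟨x * g₁, g₂, f, by rw [mul_assoc], .cons e h1, h2, h3⟩

theorem GAut.star_lang (M₁ : GAut G) :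
    M₁.star.lang = (Submonoid.closure M₁.lang : Set G) := by
  ext g
  constructor
  · rintro ⟨i, hi, f, hf, hr⟩
    simp only [star, Set.mem_singleton_iff] at hi hf
    subst hi; subst hf
    exact (GAut.star_reach_none hr rfl).1 rfl
  · intro hg
    have key : ∀ x ∈ Submonoid.closure M₁.lang, M₁.star.Reach none x none := by
      intro x hx
      induction hx using Submonoid.closure_induction with
      | mem y hy =>
        obtain ⟨i, hi, f, hf, hr⟩ := hy
        have h1 : M₁.star.Reach none (1 * (y * (1 * 1))) none :=
          .cons (q' := some i) (show (1:G) ∈ M₁.star.step none (some i) from ⟨rfl, hi⟩)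
            ((GAut.star_reach_of_some hr).append
              ((GAut.Reach.cons (M := M₁.star)
                (show (1:G) ∈ M₁.star.step (some f) none from ⟨rfl, hf⟩)
                (GAut.Reach.refl (M := M₁.star) none)) : M₁.star.Reach (some f) (1 * 1) none))
        simpa using h1
      | one => exact GAut.Reach.refl (M := M₁.star) none
      | mul a b _ _ iha ihb => exact iha.append ihb
    exact ⟨none, rfl, none, rfl, key g hg⟩

end Aut
section Main
variable {G : Type} [Group G]

def GAut.Reachable (M : GAut G) (q : M.Q) : Prop := ∃ g i, i ∈ M.init ∧ M.Reach i g q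
def GAut.CoR (M : GAut G) (q : M.Q) : Prop := ∃ g f, f ∈ M.acc ∧ M.Reach q g f
def GAut.Good (M : GAut G) (q : M.Q) : Prop := M.Reachable q ∧ M.CoR q

open Classical in
noncomputable def GAut.u (M : GAut G) (q : M.Q) : G :=
  if q ∈ M.init then 1 else if h : M.Reachable q then h.choose else 1

open Classical in
noncomputable def GAut.v (M : GAut G) (q : M.Q) : G :=
  if q ∈ M.acc then 1 else if h : M.CoR q then h.choose else 1

theorem GAut.u_init (M : GAut G) {q : M.Q} (h : q ∈ M.init) : M.u q = 1 := by
  unfold GAut.u; rw [if_pos h]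

theorem GAut.v_acc (M : GAut G) {q : M.Q} (h : q ∈ M.acc) : M.v q = 1 := by
  unfold GAut.v; rw [if_pos h]

theorem GAut.u_spec (M : GAut G) {q : M.Q} (h : M.Reachable q) :
    ∃ i ∈ M.init, M.Reach i (M.u q) q := by
  unfold GAut.u
  split
  · next hq => exact ⟨q, hq, .refl q⟩
  · exact h.choose_spec

theorem GAut.v_spec (M : GAut G) {q : M.Q} (h : M.CoR q) :
    ∃ f ∈ M.acc, M.Reach q (M.v q) f := by
  unfold GAut.v
  split
  · next hq => exact ⟨q, hq, .refl q⟩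
  · exact h.choose_spec

noncomputable def GAut.gen (M : GAut G) : Set G :=
  (⋃ q ∈ {q | M.Good q}, ⋃ q' ∈ {q' | M.Good q'}, (fun g => M.u q * g * M.v q') '' M.step q q')
  ∪ ((fun q => M.u q * M.v q) '' {q | M.Good q})

theorem GAut.gen_finite (M : GAut G) : M.gen.Finite := by
  haveI := M.fin
  refine Set.Finite.union ?_ (Set.Finite.image _ (Set.toFinite _))
  refine Set.Finite.biUnion (Set.toFinite _) fun q _ => ?_
  refine Set.Finite.biUnion (Set.toFinite _) fun q' _ => ?_
  exact Set.Finite.image _ (M.stepFin q q')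

theorem GAut.gen_subset (M : GAut G) : M.gen ⊆ M.lang := by
  rintro x (hx | hx)
  · simp only [Set.mem_iUnion, Set.mem_image, Set.mem_setOf_eq] at hx
    obtain ⟨q, hq, q', hq', g, hg, rfl⟩ := hx
    obtain ⟨i, hi, hru⟩ := M.u_spec hq.1
    obtain ⟨f, hf, hrv⟩ := M.v_spec hq'.2
    refine ⟨i, hi, f, hf, ?_⟩
    have := hru.append (GAut.Reach.cons hg hrv)
    simpa [mul_assoc] using this
  · obtain ⟨q, hq, rfl⟩ := hx
    obtain ⟨i, hi, hru⟩ := M.u_spec hq.1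
    obtain ⟨f, hf, hrv⟩ := M.v_spec hq.2
    exact ⟨i, hi, f, hf, hru.append hrv⟩

theorem GAut.key (M : GAut G) {q q' : M.Q} {g : G} (h : M.Reach q g q') :
    M.Reachable q → M.CoR q' →
    M.u q * g * M.v q' ∈ Subgroup.closure M.gen := by
  induction h with
  | refl q =>
    intro h1 h2
    have : M.u q * M.v q ∈ M.gen := Or.inr ⟨q, ⟨h1, h2⟩, rfl⟩
    simpa using Subgroup.subset_closure this
  | @cons q qm qe x h e hr ih =>
    intro h1 h2
    have hmid_reach : M.Reachable qm := by
      obtain ⟨w, i, hi, hw⟩ := h1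
      exact ⟨w * (x * 1), i, hi, hw.append (.cons e (.refl qm))⟩
    have hmid_cor : M.CoR qm := by
      obtain ⟨w, f, hf, hw⟩ := h2
      exact ⟨h * w, f, hf, hr.append hw⟩
    have hq_cor : M.CoR q := by
      obtain ⟨w, f, hf, hw⟩ := hmid_cor
      exact ⟨x * w, f, hf, GAut.Reach.cons e hw⟩
    have t1 : M.u q * x * M.v qm ∈ M.gen := by
      refine Or.inl ?_
      simp only [Set.mem_iUnion, Set.mem_image, Set.mem_setOf_eq]
      exact ⟨q, ⟨h1, hq_cor⟩, qm, ⟨hmid_reach, hmid_cor⟩, x, e, rfl⟩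
    have t2 : M.u qm * M.v qm ∈ M.gen := Or.inr ⟨qm, ⟨hmid_reach, hmid_cor⟩, rfl⟩
    have t3 := ih hmid_reach h2
    have heq : M.u q * (x * h) * M.v qe =
        (M.u q * x * M.v qm) * (M.u qm * M.v qm)⁻¹ * (M.u qm * h * M.v qe) := by group
    rw [heq]
    exact mul_mem (mul_mem (Subgroup.subset_closure t1)
      (inv_mem (Subgroup.subset_closure t2))) t3

theorem GAut.lang_fg (M : GAut G) (H : Subgroup G) (hH : M.lang = H) : H.FG := by
  rw [Subgroup.fg_iff]
  refine ⟨M.gen, le_antisymm ?_ ?_, M.gen_finite⟩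
  · exact (Subgroup.closure_le H).2 (by rw [← hH]; exact M.gen_subset)
  · intro x hx
    have hx' : x ∈ M.lang := by rw [hH]; exact hx
    obtain ⟨i, hi, f, hf, hr⟩ := hx'
    have h1 : M.Reachable i := ⟨1, i, hi, .refl i⟩
    have h2 : M.CoR f := ⟨1, f, hf, .refl f⟩
    have := M.key hr h1 h2
    rwa [M.u_init hi, M.v_acc hf, one_mul, mul_one] at this

end Main

theorem IsRational.exists_gaut {G : Type} [Monoid G] {S : Set G} (h : IsRational S) :
    ∃ M : GAut G, M.lang = S := by
  induction h with
  | finite s hs => exact ⟨_, GAut.ofFinite_lang s hs⟩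
  | union s t _ _ ih1 ih2 =>
    obtain ⟨M1, rfl⟩ := ih1; obtain ⟨M2, rfl⟩ := ih2
    exact ⟨_, GAut.union_lang M1 M2⟩
  | mul s t _ _ ih1 ih2 =>
    obtain ⟨M1, rfl⟩ := ih1; obtain ⟨M2, rfl⟩ := ih2
    exact ⟨_, GAut.prod_lang M1 M2⟩
  | star s _ ih =>
    obtain ⟨M1, rfl⟩ := ih
    exact ⟨_, GAut.star_lang M1⟩

theorem isRational_subgroup_fg {G : Type} [Group G] (H : Subgroup G)
    (h : IsRational (H : Set G)) : H.FG := by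
  obtain ⟨M, hM⟩ := h.exists_gaut
  exact M.lang_fg H hM

/-- Anisimov–Seifert: a subgroup of a finitely generated free group that is a rational
subset is finitely generated; consequently, a group presented by a rational normal
subgroup of relations is finitely presented (the normal subgroup is the normal closure
of a finite set). -/
theorem rational_subgroup_fg {A : Type} [Finite A] :
    (∀ H : Subgroup (FreeGroup A), IsRational (H : Set (FreeGroup A)) → H.FG) ∧
    (∀ N : Subgroup (FreeGroup A), N.Normal → IsRational (N : Set (FreeGroup A)) →
      ∃ E : Finset (FreeGroup A), Subgroup.normalClosure (E : Set (FreeGroup A)) = N) := by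
  refine ⟨fun H h => isRational_subgroup_fg H h, fun N hN h => ?_⟩
  haveI := hN
  obtain ⟨S, hS, hSfin⟩ := (Subgroup.fg_iff N).1 (isRational_subgroup_fg N h)
  refine ⟨hSfin.toFinset, le_antisymm ?_ ?_⟩
  · refine Subgroup.normalClosure_le_normal ?_
    rw [hSfin.coe_toFinset, ← hS]
    exact Subgroup.subset_closure
  · rw [← hS]
    refine (Subgroup.closure_le _).2 ?_
    intro x hx
    exact Subgroup.subset_normalClosure (by rw [hSfin.coe_toFinset]; exact hx)
end

section
/- Let A be a finite alphabet, c a letter not in A, B = A ∪ {c}, and let f : A* → B* be defined by f(w) = w for w ≠ 1 and f(1) = c. Extend f componentwise to pairs. If T ⊆ A* × A* is a rational relation, then f(T) = {(f(u), f(v)) | (u,v) ∈ T} is a rational subset of B* × B*. -/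
open scoped Pointwise
open Classical

/-- The map `f : A* → B*`, `B = A ∪ {c}`, fixing nonempty words and sending the empty
word to the new letter `c` (modelled as `Sum.inr ()`). -/
noncomputable def padEmpty {A : Type} (w : FreeMonoid A) : FreeMonoid (A ⊕ Unit) :=
  if w = 1 then FreeMonoid.of (Sum.inr ()) else FreeMonoid.map Sum.inl w

namespace PadAux
variable {A : Type}

lemma fm_mul_eq_one {x y : FreeMonoid A} : x * y = 1 ↔ x = 1 ∧ y = 1 := by
  constructor
  · intro h
    have h2 : FreeMonoid.toList x ++ FreeMonoid.toList y = ([] : List A) := by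
      rw [← FreeMonoid.toList_mul, h]; rfl
    rcases List.append_eq_nil_iff.mp h2 with ⟨h3, h4⟩
    exact ⟨FreeMonoid.toList.injective h3, FreeMonoid.toList.injective h4⟩
  · rintro ⟨rfl, rfl⟩; exact one_mul 1

lemma fm_ne_one_left {x y : FreeMonoid A} (h : x ≠ 1) : x * y ≠ 1 :=
  fun hc => h (fm_mul_eq_one.mp hc).1

lemma fm_ne_one_right {x y : FreeMonoid A} (h : y ≠ 1) : x * y ≠ 1 :=
  fun hc => h (fm_mul_eq_one.mp hc).2

lemma fm_prod_eq_one {l : List (FreeMonoid A)} (h : l.prod = 1) : ∀ x ∈ l, x = 1 := by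
  induction l with
  | nil => simp
  | cons x l ih =>
    rw [List.prod_cons] at h
    rcases fm_mul_eq_one.mp h with ⟨h1, h2⟩
    intro y hy
    rcases List.mem_cons.mp hy with rfl | hy
    · exact h1
    · exact ih h2 y hy

lemma fst_list_prod (l : List (FreeMonoid A × FreeMonoid A)) :
    (l.prod).1 = (l.map Prod.fst).prod := by
  induction l with
  | nil => rfl
  | cons x l ih => simp [List.prod_cons, ih]

lemma snd_list_prod (l : List (FreeMonoid A × FreeMonoid A)) :
    (l.prod).2 = (l.map Prod.snd).prod := by
  induction l with
  | nil => rfl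
  | cons x l ih => simp [List.prod_cons, ih]

lemma snd_all_one {l : List (FreeMonoid A × FreeMonoid A)} (h : (l.prod).2 = 1) :
    ∀ x ∈ l, x.2 = 1 := by
  rw [snd_list_prod] at h
  intro x hx
  exact fm_prod_eq_one h _ (List.mem_map_of_mem (f := Prod.snd) hx)

lemma fst_all_one {l : List (FreeMonoid A × FreeMonoid A)} (h : (l.prod).1 = 1) :
    ∀ x ∈ l, x.1 = 1 := by
  rw [fst_list_prod] at h
  intro x hx
  exact fm_prod_eq_one h _ (List.mem_map_of_mem (f := Prod.fst) hx)

def Sec (a b : Bool) : Set (FreeMonoid A × FreeMonoid A) :=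
  {p | (a = true ↔ p.1 ≠ 1) ∧ (b = true ↔ p.2 ≠ 1)}

lemma sec_tt_iff {p : FreeMonoid A × FreeMonoid A} :
    p ∈ Sec true true ↔ p.1 ≠ 1 ∧ p.2 ≠ 1 := by simp [Sec]
lemma sec_tf_iff {p : FreeMonoid A × FreeMonoid A} :
    p ∈ Sec true false ↔ p.1 ≠ 1 ∧ p.2 = 1 := by simp [Sec]
lemma sec_ft_iff {p : FreeMonoid A × FreeMonoid A} :
    p ∈ Sec false true ↔ p.1 = 1 ∧ p.2 ≠ 1 := by simp [Sec]
lemma sec_ff_iff {p : FreeMonoid A × FreeMonoid A} :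
    p ∈ Sec false false ↔ p.1 = 1 ∧ p.2 = 1 := by simp [Sec]

lemma mem_sec_total (p : FreeMonoid A × FreeMonoid A) : ∃ a b, p ∈ Sec a b := by
  by_cases h1 : p.1 = 1 <;> by_cases h2 : p.2 = 1
  · exact ⟨false, false, by simp [Sec, h1, h2]⟩
  · exact ⟨false, true, by simp [Sec, h1, h2]⟩
  · exact ⟨true, false, by simp [Sec, h1, h2]⟩
  · exact ⟨true, true, by simp [Sec, h1, h2]⟩

lemma sec_unique {p : FreeMonoid A × FreeMonoid A} {a b a' b' : Bool}
    (h : p ∈ Sec a b) (h' : p ∈ Sec a' b') : a = a' ∧ b = b' := by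
  obtain ⟨h1, h2⟩ := h; obtain ⟨h1', h2'⟩ := h'
  constructor
  · cases a <;> cases a' <;> simp_all
  · cases b <;> cases b' <;> simp_all

lemma sec_mul {p q : FreeMonoid A × FreeMonoid A} {a₁ b₁ a₂ b₂ : Bool}
    (hp : p ∈ Sec a₁ b₁) (hq : q ∈ Sec a₂ b₂) : p * q ∈ Sec (a₁ || a₂) (b₁ || b₂) := by
  obtain ⟨h1, h2⟩ := hp; obtain ⟨h1', h2'⟩ := hq
  constructor
  · show (a₁ || a₂) = true ↔ (p * q).1 ≠ 1
    have hm : ((p * q).1 = 1) ↔ (p.1 = 1 ∧ q.1 = 1) := fm_mul_eq_one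
    cases a₁ <;> cases a₂ <;> simp_all
  · show (b₁ || b₂) = true ↔ (p * q).2 ≠ 1
    have hm : ((p * q).2 = 1) ↔ (p.2 = 1 ∧ q.2 = 1) := fm_mul_eq_one
    cases b₁ <;> cases b₂ <;> simp_all


section StarCase

variable {A : Type}

lemma list_prod_mem_closure_of_forall {g : Set (FreeMonoid A × FreeMonoid A)}
    {l : List (FreeMonoid A × FreeMonoid A)} (h : ∀ y ∈ l, y = 1 ∨ y ∈ g) :
    l.prod ∈ Submonoid.closure g := by
  induction l with
  | nil => simpa using one_mem (Submonoid.closure g)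
  | cons x l ih =>
    rw [List.prod_cons]
    have hx : x ∈ Submonoid.closure g := by
      rcases h x List.mem_cons_self with rfl | hx
      · exact one_mem _
      · exact Submonoid.subset_closure hx
    exact mul_mem hx (ih fun y hy => h y (List.mem_cons_of_mem _ hy))

lemma exists_head_split {g : Set (FreeMonoid A × FreeMonoid A)} :
    ∀ {l : List (FreeMonoid A × FreeMonoid A)}, (∀ y ∈ l, y = 1 ∨ y ∈ g) → l.prod ≠ 1 →
      ∃ x ∈ g, ∃ r : List (FreeMonoid A × FreeMonoid A),
        (∀ y ∈ r, y = 1 ∨ y ∈ g) ∧ x * r.prod = l.prod := by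
  intro l
  induction l with
  | nil => intro _ h; simp at h
  | cons x l ih =>
    intro hall hne
    rcases hall x List.mem_cons_self with rfl | hx
    · rw [List.prod_cons, one_mul] at hne ⊢
      exact ih (fun y hy => hall y (List.mem_cons_of_mem _ hy)) hne
    · exact ⟨x, hx, l, fun y hy => hall y (List.mem_cons_of_mem _ hy),
        (List.prod_cons).symm⟩

lemma closure_inter_ff (s : Set (FreeMonoid A × FreeMonoid A)) :
    (Submonoid.closure s : Set (FreeMonoid A × FreeMonoid A)) ∩ Sec false false
      = {((1 : FreeMonoid A), (1 : FreeMonoid A))} := by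
  ext p
  simp only [Set.mem_inter_iff, sec_ff_iff, Set.mem_singleton_iff]
  constructor
  · rintro ⟨_, h1, h2⟩; exact Prod.ext h1 h2
  · rintro rfl; exact ⟨SetLike.mem_coe.mpr (one_mem _), rfl, rfl⟩

lemma closure_inter_tf (s : Set (FreeMonoid A × FreeMonoid A)) :
    (Submonoid.closure s : Set (FreeMonoid A × FreeMonoid A)) ∩ Sec true false
      = (s ∩ Sec true false) *
          (Submonoid.closure (s ∩ Sec true false) : Set (FreeMonoid A × FreeMonoid A)) := by
  ext p
  constructor
  · rintro ⟨hpC, hpS⟩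
    rw [sec_tf_iff] at hpS
    obtain ⟨l, hl, hprod⟩ := Submonoid.exists_list_of_mem_closure (SetLike.mem_coe.mp hpC)
    have hsnd : ∀ y ∈ l, y.2 = 1 := snd_all_one (by rw [hprod]; exact hpS.2)
    have hall : ∀ y ∈ l, y = 1 ∨ y ∈ s ∩ Sec true false := by
      intro y hy
      by_cases hy1 : y.1 = 1
      · exact Or.inl (Prod.ext hy1 (hsnd y hy))
      · exact Or.inr ⟨hl y hy, sec_tf_iff.mpr ⟨hy1, hsnd y hy⟩⟩
    have hne : l.prod ≠ 1 := by rw [hprod]; rintro rfl; exact hpS.1 rfl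
    obtain ⟨x, hx, r, hr, heq⟩ := exists_head_split hall hne
    exact ⟨x, hx, r.prod, SetLike.mem_coe.mpr (list_prod_mem_closure_of_forall hr),
      by show x * r.prod = p; rw [heq, hprod]⟩
  · rintro ⟨x, hx, c, hc, rfl⟩
    have hcC : c ∈ Submonoid.closure s :=
      Submonoid.closure_mono Set.inter_subset_left (SetLike.mem_coe.mp hc)
    have hxC : x ∈ Submonoid.closure s := Submonoid.subset_closure hx.1
    refine ⟨SetLike.mem_coe.mpr (mul_mem hxC hcC), ?_⟩
    obtain ⟨l, hl, hprod⟩ := Submonoid.exists_list_of_mem_closure (SetLike.mem_coe.mp hc)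
    have hc2 : c.2 = 1 := by
      rw [← hprod, snd_list_prod]
      refine List.prod_eq_one ?_
      intro z hz
      obtain ⟨y, hy, rfl⟩ := List.mem_map.mp hz
      exact (sec_tf_iff.mp (hl y hy).2).2
    have hx1 := sec_tf_iff.mp hx.2
    rw [sec_tf_iff]
    constructor
    · show x.1 * c.1 ≠ 1
      exact fm_ne_one_left hx1.1
    · show x.2 * c.2 = 1
      rw [hx1.2, hc2, one_mul]

lemma closure_inter_ft (s : Set (FreeMonoid A × FreeMonoid A)) :
    (Submonoid.closure s : Set (FreeMonoid A × FreeMonoid A)) ∩ Sec false true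
      = (s ∩ Sec false true) *
          (Submonoid.closure (s ∩ Sec false true) : Set (FreeMonoid A × FreeMonoid A)) := by
  ext p
  constructor
  · rintro ⟨hpC, hpS⟩
    rw [sec_ft_iff] at hpS
    obtain ⟨l, hl, hprod⟩ := Submonoid.exists_list_of_mem_closure (SetLike.mem_coe.mp hpC)
    have hfst : ∀ y ∈ l, y.1 = 1 := fst_all_one (by rw [hprod]; exact hpS.1)
    have hall : ∀ y ∈ l, y = 1 ∨ y ∈ s ∩ Sec false true := by
      intro y hy
      by_cases hy2 : y.2 = 1
      · exact Or.inl (Prod.ext (hfst y hy) hy2)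
      · exact Or.inr ⟨hl y hy, sec_ft_iff.mpr ⟨hfst y hy, hy2⟩⟩
    have hne : l.prod ≠ 1 := by rw [hprod]; rintro rfl; exact hpS.2 rfl
    obtain ⟨x, hx, r, hr, heq⟩ := exists_head_split hall hne
    exact ⟨x, hx, r.prod, SetLike.mem_coe.mpr (list_prod_mem_closure_of_forall hr),
      by show x * r.prod = p; rw [heq, hprod]⟩
  · rintro ⟨x, hx, c, hc, rfl⟩
    have hcC : c ∈ Submonoid.closure s :=
      Submonoid.closure_mono Set.inter_subset_left (SetLike.mem_coe.mp hc)
    have hxC : x ∈ Submonoid.closure s := Submonoid.subset_closure hx.1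
    refine ⟨SetLike.mem_coe.mpr (mul_mem hxC hcC), ?_⟩
    obtain ⟨l, hl, hprod⟩ := Submonoid.exists_list_of_mem_closure (SetLike.mem_coe.mp hc)
    have hc1 : c.1 = 1 := by
      rw [← hprod, fst_list_prod]
      refine List.prod_eq_one ?_
      intro z hz
      obtain ⟨y, hy, rfl⟩ := List.mem_map.mp hz
      exact (sec_ft_iff.mp (hl y hy).2).1
    have hx2 := sec_ft_iff.mp hx.2
    rw [sec_ft_iff]
    constructor
    · show x.1 * c.1 = 1
      rw [hx2.1, hc1, one_mul]
    · show x.2 * c.2 ≠ 1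
      exact fm_ne_one_left hx2.2

end StarCase


section TT

variable {A : Type} (s : Set (FreeMonoid A × FreeMonoid A))

lemma tt_aux :
    ∀ l : List (FreeMonoid A × FreeMonoid A), (∀ y ∈ l, y ∈ s) →
      l.prod.1 ≠ 1 → l.prod.2 ≠ 1 →
      l.prod ∈
        (Submonoid.closure s : Set (FreeMonoid A × FreeMonoid A)) * (s ∩ Sec true true) *
            (Submonoid.closure s : Set (FreeMonoid A × FreeMonoid A)) ∪
          (s ∩ Sec true false) * (Submonoid.closure s : Set (FreeMonoid A × FreeMonoid A)) *
            (s ∩ Sec false true) * (Submonoid.closure s : Set (FreeMonoid A × FreeMonoid A)) ∪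
          (s ∩ Sec false true) * (Submonoid.closure s : Set (FreeMonoid A × FreeMonoid A)) *
            (s ∩ Sec true false) * (Submonoid.closure s : Set (FreeMonoid A × FreeMonoid A)) := by
  intro l
  induction l with
  | nil => intro _ h1 _; exact absurd rfl h1
  | cons x l ih =>
    intro hall h1 h2
    have hls : ∀ y ∈ l, y ∈ s := fun y hy => hall y (List.mem_cons_of_mem _ hy)
    have hx : x ∈ s := hall x List.mem_cons_self
    have hlC : l.prod ∈ Submonoid.closure s :=
      list_prod_mem (fun z hz => Submonoid.subset_closure (hls z hz))
    rw [List.prod_cons] at h1 h2 ⊢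
    by_cases hx1 : x.1 = 1 <;> by_cases hx2 : x.2 = 1
    · -- x = 1
      have hxe : x = 1 := Prod.ext hx1 hx2
      rw [hxe, one_mul] at h1 h2 ⊢
      exact ih hls h1 h2
    · -- x ∈ v : Sec false true
      have hl1 : l.prod.1 ≠ 1 := by
        intro hc; apply h1; show x.1 * l.prod.1 = 1; rw [hx1, hc, one_mul]
      obtain ⟨y, hyl, hy1⟩ : ∃ y ∈ l, y.1 ≠ 1 := by
        by_contra hc; push_neg at hc
        apply hl1
        rw [fst_list_prod]
        refine List.prod_eq_one ?_
        intro z hz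
        obtain ⟨y, hy, rfl⟩ := List.mem_map.mp hz
        exact hc y hy
      obtain ⟨l₁, l₂, rfl⟩ := List.append_of_mem hyl
      have hl₁C : l₁.prod ∈ Submonoid.closure s :=
        list_prod_mem (fun z hz => Submonoid.subset_closure (hls z (by simp [hz])))
      have hl₂C : l₂.prod ∈ Submonoid.closure s :=
        list_prod_mem (fun z hz => Submonoid.subset_closure (hls z (by simp [hz])))
      have hys : y ∈ s := hls y (by simp)
      have heq : x * (l₁ ++ y :: l₂).prod = ((x * l₁.prod) * y) * l₂.prod := by
        rw [List.prod_append, List.prod_cons]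
        simp only [mul_assoc]
      rw [heq]
      by_cases hy2 : y.2 = 1
      · -- y ∈ u : v * C * u * C
        refine Set.mem_union_right _ ?_
        exact Set.mul_mem_mul (Set.mul_mem_mul
          (Set.mul_mem_mul ⟨hx, sec_ft_iff.mpr ⟨hx1, hx2⟩⟩ (SetLike.mem_coe.mpr hl₁C))
          ⟨hys, sec_tf_iff.mpr ⟨hy1, hy2⟩⟩) (SetLike.mem_coe.mpr hl₂C)
      · -- y ∈ w : C * w * C
        refine Set.mem_union_left _ (Set.mem_union_left _ ?_)
        have hxl₁ : x * l₁.prod ∈ Submonoid.closure s :=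
          mul_mem (Submonoid.subset_closure hx) hl₁C
        exact Set.mul_mem_mul (Set.mul_mem_mul (SetLike.mem_coe.mpr hxl₁)
          ⟨hys, sec_tt_iff.mpr ⟨hy1, hy2⟩⟩) (SetLike.mem_coe.mpr hl₂C)
    · -- x ∈ u : Sec true false
      have hl2 : l.prod.2 ≠ 1 := by
        intro hc; apply h2; show x.2 * l.prod.2 = 1; rw [hx2, hc, one_mul]
      obtain ⟨y, hyl, hy2⟩ : ∃ y ∈ l, y.2 ≠ 1 := by
        by_contra hc; push_neg at hc
        apply hl2
        rw [snd_list_prod]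
        refine List.prod_eq_one ?_
        intro z hz
        obtain ⟨y, hy, rfl⟩ := List.mem_map.mp hz
        exact hc y hy
      obtain ⟨l₁, l₂, rfl⟩ := List.append_of_mem hyl
      have hl₁C : l₁.prod ∈ Submonoid.closure s :=
        list_prod_mem (fun z hz => Submonoid.subset_closure (hls z (by simp [hz])))
      have hl₂C : l₂.prod ∈ Submonoid.closure s :=
        list_prod_mem (fun z hz => Submonoid.subset_closure (hls z (by simp [hz])))
      have hys : y ∈ s := hls y (by simp)
      have heq : x * (l₁ ++ y :: l₂).prod = ((x * l₁.prod) * y) * l₂.prod := by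
        rw [List.prod_append, List.prod_cons]
        simp only [mul_assoc]
      rw [heq]
      by_cases hy1 : y.1 = 1
      · -- y ∈ v : u * C * v * C
        refine Set.mem_union_left _ (Set.mem_union_right _ ?_)
        exact Set.mul_mem_mul (Set.mul_mem_mul
          (Set.mul_mem_mul ⟨hx, sec_tf_iff.mpr ⟨hx1, hx2⟩⟩ (SetLike.mem_coe.mpr hl₁C))
          ⟨hys, sec_ft_iff.mpr ⟨hy1, hy2⟩⟩) (SetLike.mem_coe.mpr hl₂C)
      · -- y ∈ w : C * w * C
        refine Set.mem_union_left _ (Set.mem_union_left _ ?_)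
        have hxl₁ : x * l₁.prod ∈ Submonoid.closure s :=
          mul_mem (Submonoid.subset_closure hx) hl₁C
        exact Set.mul_mem_mul (Set.mul_mem_mul (SetLike.mem_coe.mpr hxl₁)
          ⟨hys, sec_tt_iff.mpr ⟨hy1, hy2⟩⟩) (SetLike.mem_coe.mpr hl₂C)
    · -- x ∈ w : C * w * C
      refine Set.mem_union_left _ (Set.mem_union_left _ ?_)
      have heq : x * l.prod = ((1 : FreeMonoid A × FreeMonoid A) * x) * l.prod := by
        rw [one_mul]
      rw [heq]
      exact Set.mul_mem_mul (Set.mul_mem_mul (SetLike.mem_coe.mpr (one_mem _))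
        ⟨hx, sec_tt_iff.mpr ⟨hx1, hx2⟩⟩) (SetLike.mem_coe.mpr hlC)

lemma closure_inter_tt :
    (Submonoid.closure s : Set (FreeMonoid A × FreeMonoid A)) ∩ Sec true true
      = (Submonoid.closure s : Set (FreeMonoid A × FreeMonoid A)) * (s ∩ Sec true true) *
            (Submonoid.closure s : Set (FreeMonoid A × FreeMonoid A)) ∪
          (s ∩ Sec true false) * (Submonoid.closure s : Set (FreeMonoid A × FreeMonoid A)) *
            (s ∩ Sec false true) * (Submonoid.closure s : Set (FreeMonoid A × FreeMonoid A)) ∪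
          (s ∩ Sec false true) * (Submonoid.closure s : Set (FreeMonoid A × FreeMonoid A)) *
            (s ∩ Sec true false) * (Submonoid.closure s : Set (FreeMonoid A × FreeMonoid A)) := by
  ext p
  constructor
  · rintro ⟨hpC, hpS⟩
    rw [sec_tt_iff] at hpS
    obtain ⟨l, hl, hprod⟩ := Submonoid.exists_list_of_mem_closure (SetLike.mem_coe.mp hpC)
    have := tt_aux s l hl (by rw [hprod]; exact hpS.1) (by rw [hprod]; exact hpS.2)
    rwa [hprod] at this
  · intro hp
    rcases hp with (hp | hp) | hp
    · obtain ⟨q, hq, c₂, hc₂, rfl⟩ := hp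
      obtain ⟨c₁, hc₁, ω, hω, rfl⟩ := hq
      have hω' := sec_tt_iff.mp hω.2
      refine ⟨SetLike.mem_coe.mpr (mul_mem (mul_mem (SetLike.mem_coe.mp hc₁)
        (Submonoid.subset_closure hω.1)) (SetLike.mem_coe.mp hc₂)), ?_⟩
      rw [sec_tt_iff]
      constructor
      · show (c₁.1 * ω.1) * c₂.1 ≠ 1
        exact fm_ne_one_left (fm_ne_one_right hω'.1)
      · show (c₁.2 * ω.2) * c₂.2 ≠ 1
        exact fm_ne_one_left (fm_ne_one_right hω'.2)
    · obtain ⟨q, hq, c₂, hc₂, rfl⟩ := hp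
      obtain ⟨r, hr, y, hy, rfl⟩ := hq
      obtain ⟨x, hx, c₁, hc₁, rfl⟩ := hr
      have hx' := sec_tf_iff.mp hx.2
      have hy' := sec_ft_iff.mp hy.2
      refine ⟨SetLike.mem_coe.mpr (mul_mem (mul_mem (mul_mem
        (Submonoid.subset_closure hx.1) (SetLike.mem_coe.mp hc₁))
        (Submonoid.subset_closure hy.1)) (SetLike.mem_coe.mp hc₂)), ?_⟩
      rw [sec_tt_iff]
      constructor
      · show ((x.1 * c₁.1) * y.1) * c₂.1 ≠ 1
        exact fm_ne_one_left (fm_ne_one_left (fm_ne_one_left hx'.1))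
      · show ((x.2 * c₁.2) * y.2) * c₂.2 ≠ 1
        exact fm_ne_one_left (fm_ne_one_right hy'.2)
    · obtain ⟨q, hq, c₂, hc₂, rfl⟩ := hp
      obtain ⟨r, hr, y, hy, rfl⟩ := hq
      obtain ⟨x, hx, c₁, hc₁, rfl⟩ := hr
      have hx' := sec_ft_iff.mp hx.2
      have hy' := sec_tf_iff.mp hy.2
      refine ⟨SetLike.mem_coe.mpr (mul_mem (mul_mem (mul_mem
        (Submonoid.subset_closure hx.1) (SetLike.mem_coe.mp hc₁))
        (Submonoid.subset_closure hy.1)) (SetLike.mem_coe.mp hc₂)), ?_⟩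
      rw [sec_tt_iff]
      constructor
      · show ((x.1 * c₁.1) * y.1) * c₂.1 ≠ 1
        exact fm_ne_one_left (fm_ne_one_right hy'.1)
      · show ((x.2 * c₁.2) * y.2) * c₂.2 ≠ 1
        exact fm_ne_one_left (fm_ne_one_left (fm_ne_one_left hx'.2))
    

end TT


section Rat

lemma isRational_iUnion {M : Type} [Monoid M] {ι : Type} [Fintype ι] (f : ι → Set M)
    (h : ∀ i, IsRational (f i)) : IsRational (⋃ i, f i) := by
  have key : ∀ K : Finset ι, IsRational (⋃ i ∈ K, f i) := by
    intro K
    induction K using Finset.induction with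
    | empty =>
      rw [show (⋃ i ∈ (∅ : Finset ι), f i) = ∅ by simp]
      exact .finite _ Set.finite_empty
    | @insert a K ha ih =>
      rw [Finset.set_biUnion_insert]
      exact .union _ _ (h a) ih
  rw [show (⋃ i, f i) = ⋃ i ∈ Finset.univ, f i by simp]
  exact key _

lemma isRational_image {M N : Type} [Monoid M] [Monoid N] (h : M →* N) {s : Set M}
    (hs : IsRational s) : IsRational (⇑h '' s) := by
  induction hs with
  | finite s hf => exact .finite _ (hf.image _)
  | union s t _ _ ihs iht => rw [Set.image_union]; exact .union _ _ ihs iht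
  | mul s t _ _ ihs iht => rw [Set.image_mul]; exact .mul _ _ ihs iht
  | star s _ ih =>
    rw [show ⇑h '' ↑(Submonoid.closure s) = ↑(Submonoid.closure (⇑h '' s)) by
      rw [← MonoidHom.map_mclosure, Submonoid.coe_map]]
    exact .star _ ih

lemma rational_inter_sec {A : Type} (T : Set (FreeMonoid A × FreeMonoid A))
    (hT : IsRational T) : ∀ a b : Bool, IsRational (T ∩ Sec a b) := by
  induction hT with
  | finite s hf => exact fun a b => .finite _ (hf.inter_of_left _)
  | union s t _ _ ihs iht =>
    intro a b
    rw [Set.union_inter_distrib_right]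
    exact .union _ _ (ihs a b) (iht a b)
  | mul s t _ _ ihs iht =>
    intro a b
    set F : (Bool × Bool) × Bool × Bool → Set (FreeMonoid A × FreeMonoid A) :=
      fun q => if (q.1.1 || q.2.1) = a ∧ (q.1.2 || q.2.2) = b then
        (s ∩ Sec q.1.1 q.1.2) * (t ∩ Sec q.2.1 q.2.2) else ∅ with hF
    have heq : (s * t) ∩ Sec a b = ⋃ q, F q := by
      ext z
      simp only [Set.mem_iUnion]
      constructor
      · rintro ⟨hz, hsec⟩
        obtain ⟨x, hx, y, hy, rfl⟩ := hz
        obtain ⟨a₁, b₁, hx₂⟩ := mem_sec_total x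
        obtain ⟨a₂, b₂, hy₂⟩ := mem_sec_total y
        have hmul := sec_mul hx₂ hy₂
        obtain ⟨ha, hb⟩ := sec_unique hmul hsec
        refine ⟨((a₁, b₁), (a₂, b₂)), ?_⟩
        rw [hF]
        simp only [if_pos (⟨ha, hb⟩ : (a₁ || a₂) = a ∧ (b₁ || b₂) = b)]
        exact ⟨x, ⟨hx, hx₂⟩, y, ⟨hy, hy₂⟩, rfl⟩
      · rintro ⟨q, hq⟩
        simp only [hF] at hq
        by_cases hc : (q.1.1 || q.2.1) = a ∧ (q.1.2 || q.2.2) = b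
        · rw [if_pos hc] at hq
          obtain ⟨x, hx, y, hy, rfl⟩ := hq
          refine ⟨Set.mul_mem_mul hx.1 hy.1, ?_⟩
          have := sec_mul hx.2 hy.2
          rwa [hc.1, hc.2] at this
        · rw [if_neg hc] at hq
          exact absurd hq (Set.notMem_empty _)
    rw [heq]
    refine isRational_iUnion F ?_
    intro q
    simp only [hF]
    by_cases hc : (q.1.1 || q.2.1) = a ∧ (q.1.2 || q.2.2) = b
    · rw [if_pos hc]
      exact .mul _ _ (ihs _ _) (iht _ _)
    · rw [if_neg hc]
      exact .finite _ Set.finite_empty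
  | star s hs ih =>
    intro a b
    cases a <;> cases b
    · rw [closure_inter_ff]
      exact .finite _ (Set.finite_singleton _)
    · rw [closure_inter_ft]
      exact .mul _ _ (ih false true) (.star _ (ih false true))
    · rw [closure_inter_tf]
      exact .mul _ _ (ih true false) (.star _ (ih true false))
    · rw [closure_inter_tt]
      exact .union _ _ (.union _ _
        (.mul _ _ (.mul _ _ (.star _ hs) (ih true true)) (.star _ hs))
        (.mul _ _ (.mul _ _ (.mul _ _ (ih true false) (.star _ hs)) (ih false true)) (.star _ hs)))
        (.mul _ _ (.mul _ _ (.mul _ _ (ih false true) (.star _ hs)) (ih true false)) (.star _ hs))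

end Rat


section Assemble

variable {A : Type}

def padHom : (FreeMonoid A × FreeMonoid A) →*
    (FreeMonoid (A ⊕ Unit) × FreeMonoid (A ⊕ Unit)) :=
  (FreeMonoid.map Sum.inl).prodMap (FreeMonoid.map Sum.inl)

lemma padHom_apply (p : FreeMonoid A × FreeMonoid A) :
    padHom p = ((FreeMonoid.map Sum.inl) p.1, (FreeMonoid.map Sum.inl) p.2) := rfl

lemma sec_cover (T : Set (FreeMonoid A × FreeMonoid A)) :
    T = (T ∩ Sec true true) ∪ (T ∩ Sec true false) ∪ (T ∩ Sec false true) ∪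
      (T ∩ Sec false false) := by
  apply Set.Subset.antisymm
  · intro p hp
    rcases mem_sec_total p with ⟨a, b, hs⟩
    cases a <;> cases b
    · exact Set.mem_union_right _ ⟨hp, hs⟩
    · exact Set.mem_union_left _ (Set.mem_union_right _ ⟨hp, hs⟩)
    · exact Set.mem_union_left _ (Set.mem_union_left _ (Set.mem_union_right _ ⟨hp, hs⟩))
    · exact Set.mem_union_left _ (Set.mem_union_left _ (Set.mem_union_left _ ⟨hp, hs⟩))
  · intro p hp
    rcases hp with ((h | h) | h) | h <;> exact h.1

lemma image_tt (T : Set (FreeMonoid A × FreeMonoid A)) :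
    (fun p => (padEmpty p.1, padEmpty p.2)) '' (T ∩ Sec true true)
      = ⇑padHom '' (T ∩ Sec true true) := by
  apply Set.image_congr
  intro p hp
  have h := sec_tt_iff.mp hp.2
  simp only [padEmpty, if_neg h.1, if_neg h.2]
  rfl

lemma image_tf (T : Set (FreeMonoid A × FreeMonoid A)) :
    (fun p => (padEmpty p.1, padEmpty p.2)) '' (T ∩ Sec true false)
      = (⇑padHom '' (T ∩ Sec true false)) *
          ({((1 : FreeMonoid (A ⊕ Unit)), FreeMonoid.of (Sum.inr ()))} :
            Set (FreeMonoid (A ⊕ Unit) × FreeMonoid (A ⊕ Unit))) := by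
  have key : ∀ p ∈ T ∩ Sec true false,
      padHom p * ((1 : FreeMonoid (A ⊕ Unit)), FreeMonoid.of (Sum.inr ()))
        = (padEmpty p.1, padEmpty p.2) := by
    intro p hp
    have h := sec_tf_iff.mp hp.2
    have h2 : (FreeMonoid.map (Sum.inl : A → A ⊕ Unit)) p.2 = 1 := by rw [h.2, map_one]
    rw [padHom_apply, h2]
    show ((FreeMonoid.map Sum.inl) p.1 * 1, 1 * FreeMonoid.of (Sum.inr ())) = _
    rw [mul_one, one_mul]
    simp only [padEmpty, if_neg h.1, if_pos h.2]
  ext z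
  constructor
  · rintro ⟨p, hp, rfl⟩
    exact ⟨padHom p, ⟨p, hp, rfl⟩, _, rfl, key p hp⟩
  · rintro ⟨y, ⟨p, hp, rfl⟩, z', hz', rfl⟩
    have hz'' : z' = ((1 : FreeMonoid (A ⊕ Unit)), FreeMonoid.of (Sum.inr ())) := hz'
    subst hz''
    exact ⟨p, hp, (key p hp).symm⟩

lemma image_ft (T : Set (FreeMonoid A × FreeMonoid A)) :
    (fun p => (padEmpty p.1, padEmpty p.2)) '' (T ∩ Sec false true)
      = ({(FreeMonoid.of (Sum.inr ()), (1 : FreeMonoid (A ⊕ Unit)))} :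
            Set (FreeMonoid (A ⊕ Unit) × FreeMonoid (A ⊕ Unit))) *
          (⇑padHom '' (T ∩ Sec false true)) := by
  have key : ∀ p ∈ T ∩ Sec false true,
      (FreeMonoid.of (Sum.inr ()), (1 : FreeMonoid (A ⊕ Unit))) * padHom p
        = (padEmpty p.1, padEmpty p.2) := by
    intro p hp
    have h := sec_ft_iff.mp hp.2
    have h1 : (FreeMonoid.map (Sum.inl : A → A ⊕ Unit)) p.1 = 1 := by rw [h.1, map_one]
    rw [padHom_apply, h1]
    show (FreeMonoid.of (Sum.inr ()) * 1, 1 * (FreeMonoid.map Sum.inl) p.2) = _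
    rw [mul_one, one_mul]
    simp only [padEmpty, if_pos h.1, if_neg h.2]
  ext z
  constructor
  · rintro ⟨p, hp, rfl⟩
    exact ⟨_, rfl, padHom p, ⟨p, hp, rfl⟩, key p hp⟩
  · rintro ⟨z', hz', y, ⟨p, hp, rfl⟩, rfl⟩
    have hz'' : z' = (FreeMonoid.of (Sum.inr ()), (1 : FreeMonoid (A ⊕ Unit))) := hz'
    subst hz''
    exact ⟨p, hp, (key p hp).symm⟩

lemma image_ff_subset (T : Set (FreeMonoid A × FreeMonoid A)) :
    (fun p => (padEmpty p.1, padEmpty p.2)) '' (T ∩ Sec false false)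
      ⊆ {((FreeMonoid.of (Sum.inr ()) : FreeMonoid (A ⊕ Unit)),
          (FreeMonoid.of (Sum.inr ()) : FreeMonoid (A ⊕ Unit)))} := by
  rintro z ⟨p, hp, rfl⟩
  have h := sec_ff_iff.mp hp.2
  show (padEmpty p.1, padEmpty p.2) ∈ _
  simp only [padEmpty, if_pos h.1, if_pos h.2]
  rfl

end Assemble

end PadAux


/-- If `T` is a rational relation on `A*`, then its componentwise image under `padEmpty`
is a rational subset of `B* × B*`, where `B = A ∪ {c}`. -/
theorem isRational_padEmpty_image {A : Type} [Finite A]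
    (T : Set (FreeMonoid A × FreeMonoid A)) (hT : IsRational T) :
    IsRational ((fun p => (padEmpty p.1, padEmpty p.2)) '' T :
      Set (FreeMonoid (A ⊕ Unit) × FreeMonoid (A ⊕ Unit))) := by
  rw [PadAux.sec_cover T, Set.image_union, Set.image_union, Set.image_union,
    PadAux.image_tt, PadAux.image_tf, PadAux.image_ft]
  refine .union _ _ (.union _ _ (.union _ _ ?_ ?_) ?_) ?_
  · exact PadAux.isRational_image PadAux.padHom (PadAux.rational_inter_sec T hT true true)
  · exact .mul _ _ (PadAux.isRational_image PadAux.padHom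
      (PadAux.rational_inter_sec T hT true false)) (.finite _ (Set.finite_singleton _))
  · exact .mul _ _ (.finite _ (Set.finite_singleton _))
      (PadAux.isRational_image PadAux.padHom (PadAux.rational_inter_sec T hT false true))
  · exact .finite _ ((Set.finite_singleton _).subset (PadAux.image_ff_subset T))
end

section
/- Let S be a semigroup, A a finite generating set, μ : A⁺ → S the canonical homomorphism, L ⊆ A⁺ with μ(L) = S, and suppose there is a function l : A⁺ → L such that μ(l(u)) = μ(u) for all u, and (l(u), l(ua)) ∈ R_a for all u ∈ A⁺, a ∈ A (where R_a = {(u,v) ∈ L×L | μ(ua)=μ(v)}), with R = {(u,v) ∈ L×L | μ(u)=μ(v)}. Let ≡ be the semigroup congruence on A⁺ generated by T = ⋃_{a∈A} {(ua,v) | (u,v) ∈ R_a} ∪ R ∪ {(a, l(a)) | a ∈ A}. Then for all u, v ∈ A⁺: u ≡ v if and only if μ(u) = μ(v). In particular ⟨A ; T⟩ is a presentation of S. -/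
/-- The congruence generated by `T = ⋃_a {(ua,v) | (u,v) ∈ R_a} ∪ R ∪ {(a, l(a))}`
coincides with the kernel of `μ`: for all `u, v ∈ A⁺`, `u ≡ v` iff `μ(u) = μ(v)`.
In particular `⟨A ; T⟩` is a presentation of `S`. -/
theorem quasiAutomatic_presentation {A S : Type} [Finite A] [Semigroup S]
    (μ : FreeSemigroup A →ₙ* S) (hμ : Function.Surjective μ)
    (L : Set (FreeSemigroup A))
    (l : FreeSemigroup A → FreeSemigroup A)
    (hlL : ∀ u : FreeSemigroup A, l u ∈ L)
    (hlμ : ∀ u : FreeSemigroup A, μ (l u) = μ u)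
    (hla : ∀ (u : FreeSemigroup A) (a : A),
      μ (l u * FreeSemigroup.of a) = μ (l (u * FreeSemigroup.of a))) :
    ∀ u v : FreeSemigroup A,
      conGen (fun x y =>
        (∃ (a : A) (p q : FreeSemigroup A), p ∈ L ∧ q ∈ L ∧
            μ (p * FreeSemigroup.of a) = μ q ∧ x = p * FreeSemigroup.of a ∧ y = q)
        ∨ (x ∈ L ∧ y ∈ L ∧ μ x = μ y)
        ∨ (∃ a : A, x = FreeSemigroup.of a ∧ y = l (FreeSemigroup.of a))) u v
      ↔ μ u = μ v := by
  set r : FreeSemigroup A → FreeSemigroup A → Prop := fun x y =>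
        (∃ (a : A) (p q : FreeSemigroup A), p ∈ L ∧ q ∈ L ∧
            μ (p * FreeSemigroup.of a) = μ q ∧ x = p * FreeSemigroup.of a ∧ y = q)
        ∨ (x ∈ L ∧ y ∈ L ∧ μ x = μ y)
        ∨ (∃ a : A, x = FreeSemigroup.of a ∧ y = l (FreeSemigroup.of a)) with hr
  have key : ∀ u : FreeSemigroup A, conGen r u (l u) := by
    have base : ∀ (a : A) (ls : List A),
        conGen r (FreeSemigroup.mk a ls) (l (FreeSemigroup.mk a ls)) := by
      intro a ls
      induction ls using List.reverseRecOn with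
      | nil =>
        exact ConGen.Rel.of _ _ (Or.inr (Or.inr ⟨a, rfl, rfl⟩))
      | append_singleton ls b ih =>
        have hmul : FreeSemigroup.mk a ls * FreeSemigroup.of b
            = FreeSemigroup.mk a (ls ++ [b]) := rfl
        have h1 : conGen r (FreeSemigroup.mk a (ls ++ [b]))
            (l (FreeSemigroup.mk a ls) * FreeSemigroup.of b) := by
          rw [← hmul]
          exact ConGen.Rel.mul ih (ConGen.Rel.refl _)
        have h2 : r (l (FreeSemigroup.mk a ls) * FreeSemigroup.of b)
            (l (FreeSemigroup.mk a (ls ++ [b]))) := by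
          refine Or.inl ⟨b, l (FreeSemigroup.mk a ls),
            l (FreeSemigroup.mk a (ls ++ [b])), hlL _, hlL _, ?_, rfl, rfl⟩
          rw [← hmul]; exact hla _ b
        exact ConGen.Rel.trans h1 (ConGen.Rel.of _ _ h2)
    intro u; exact base u.head u.tail
  intro u v
  constructor
  · intro h
    have hle : conGen r ≤ Con.ker μ := by
      apply Con.conGen_le.mpr
      rintro x y (⟨a, p, q, _, _, hpq, hx, hy⟩ | ⟨_, _, hxy⟩ | ⟨a, hx, hy⟩)
      · show μ x = μ y; rw [hx, hy]; exact hpq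
      · exact hxy
      · show μ x = μ y; rw [hx, hy, hlμ]
    exact hle h
  · intro h
    refine ConGen.Rel.trans (key u) (ConGen.Rel.trans ?_ (ConGen.Rel.symm (key v)))
    exact ConGen.Rel.of _ _ (Or.inr (Or.inl ⟨hlL u, hlL v, by rw [hlμ, hlμ, h]⟩))
end
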